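/- arXiv:2103.02457 — 2 statements merged into one kernel-verified Lean document; each statement's English description precedes it below -/
import Mathlib

section
/- Let V be a nonnegative random variable with distribution function F_V and let Y ~ PH(π,T) be a phase-type distributed random variable independent of V. If F_V is intermediate regularly varying (F_V ∈ I), then the distribution F_{VY} of the product VY is also intermediate regularly varying. -/
open MeasureTheory ProbabilityTheory Filter Matrix Set
open scoped Topology ENNReal

noncomputable section

/-- A phase-type representation `(π, T)` of dimension `p`: `π` is a probability vector,
`T` has nonnegative off-diagonal entries, nonpositive row sums, and all eigenvalues of
strictly negative real part. -/
structure IsPHRepr {p : ℕ} (piv : Fin p → ℝ) (T : Matrix (Fin p) (Fin p) ℝ) : Prop where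
  pi_nonneg : ∀ i, 0 ≤ piv i
  pi_sum_one : ∑ i, piv i = 1
  offdiag_nonneg : ∀ i j, i ≠ j → 0 ≤ T i j
  rowsum_nonpos : ∀ i, ∑ j, T i j ≤ 0
  eig_neg : ∀ z ∈ spectrum ℂ (T.map (algebraMap ℝ ℂ)), z.re < 0

/-- Survival function `π exp(T y) e` of PH(π,T). -/
def phSurv {p : ℕ} (piv : Fin p → ℝ) (T : Matrix (Fin p) (Fin p) ℝ) (y : ℝ) : ℝ :=
  ∑ i, ∑ j, piv i * NormedSpace.exp (y • T) i j

/-- Density `π exp(T y) t`, with `t = -T e`, of PH(π,T). -/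
def phDens {p : ℕ} (piv : Fin p → ℝ) (T : Matrix (Fin p) (Fin p) ℝ) (y : ℝ) : ℝ :=
  ∑ i, ∑ j, piv i * NormedSpace.exp (y • T) i j * (-∑ k, T j k)

/-- The phase-type distribution PH(π,T): the measure on (0,∞) with Lebesgue density `phDens`. -/
def phMeasure {p : ℕ} (piv : Fin p → ℝ) (T : Matrix (Fin p) (Fin p) ℝ) : Measure ℝ :=
  volume.withDensity fun y => if 0 < y then ENNReal.ofReal (phDens piv T y) else 0

/-- The law `μ` is regularly varying with index `-α`: the tail is eventually positive and
`μ(λx,∞)/μ(x,∞) → λ^{-α}` as `x → ∞` for every `λ > 0`. -/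
def RegVary (μ : Measure ℝ) (α : ℝ) : Prop :=
  (∀ᶠ x in atTop, 0 < μ (Set.Ioi x)) ∧
  ∀ l : ℝ, 0 < l →
    Tendsto (fun x => (μ (Set.Ioi (l * x))).toReal / (μ (Set.Ioi x)).toReal) atTop
      (𝓝 (l ^ (-α)))

/-- Subexponentiality of the law `μ`: positive tail and `(1 - F*F(x))/(1 - F(x)) → 2`. -/
def Subexponential (μ : Measure ℝ) : Prop :=
  (∀ x : ℝ, 0 < μ (Set.Ioi x)) ∧
  Tendsto (fun x => ((μ.conv μ) (Set.Ioi x)).toReal / (μ (Set.Ioi x)).toReal) atTop (𝓝 2)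

/-- The class 𝒜: subexponential laws with `limsup F̄(cx)/F̄(x) < 1` for some `c > 1`. -/
def ClassA (μ : Measure ℝ) : Prop :=
  Subexponential μ ∧ ∃ c : ℝ, 1 < c ∧
    Filter.limsup (fun x => (μ (Set.Ioi (c * x))).toReal / (μ (Set.Ioi x)).toReal) atTop < 1

/-- Extended regular variation: `liminf F̄(λx)/F̄(x) ≥ λ^{-φ}` for some `φ ≥ 0`, all `λ ≥ 1`. -/
def ExtRegVary (μ : Measure ℝ) : Prop :=
  ∃ φ : ℝ, 0 ≤ φ ∧ ∀ l : ℝ, 1 ≤ l →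
    l ^ (-φ) ≤
      Filter.liminf (fun x => (μ (Set.Ioi (l * x))).toReal / (μ (Set.Ioi x)).toReal) atTop

/-- Intermediate regular variation: `lim_{λ↓1} liminf_{x→∞} F̄(λx)/F̄(x) = 1`. -/
def IntRegVary (μ : Measure ℝ) : Prop :=
  Tendsto
    (fun l : ℝ =>
      Filter.liminf (fun x => (μ (Set.Ioi (l * x))).toReal / (μ (Set.Ioi x)).toReal) atTop)
    (𝓝[>] (1 : ℝ)) (𝓝 1)

/-- Dominated variation: `liminf F̄(λx)/F̄(x) > 0` for some `λ > 1`. -/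
def DomVary (μ : Measure ℝ) : Prop :=
  ∃ l : ℝ, 1 < l ∧
    0 < Filter.liminf (fun x => (μ (Set.Ioi (l * x))).toReal / (μ (Set.Ioi x)).toReal) atTop

/-- Long-tailed laws: positive tail and `F̄(x-y)/F̄(x) → 1` for every `y`. -/
def LongTailed (μ : Measure ℝ) : Prop :=
  (∀ x : ℝ, 0 < μ (Set.Ioi x)) ∧
  ∀ y : ℝ,
    Tendsto (fun x => (μ (Set.Ioi (x - y))).toReal / (μ (Set.Ioi x)).toReal) atTop (𝓝 1)

/-- `μY` is α-regular-variation determining: for every law `μZ` of a nonnegative random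
variable (taken independent of `Y`, i.e. via the product measure), regular variation with
index `-α` of the law of the product implies that of `μZ`. -/
def IsRVD (μY : Measure ℝ) (α : ℝ) : Prop :=
  ∀ μZ : Measure ℝ, IsProbabilityMeasure μZ → μZ (Set.Iio 0) = 0 →
    RegVary (Measure.map (fun q : ℝ × ℝ => q.1 * q.2) (μY.prod μZ)) α → RegVary μZ α


namespace CPHmatrix
open NormedSpace
variable {p : ℕ}

attribute [local instance] Matrix.linftyOpNormedAddCommGroup Matrix.linftyOpNormedRing
  Matrix.linftyOpNormedAlgebra

variable {p : ℕ}

-- exp applied to a vector, as a tsum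
lemma exp_mulVec (X : Matrix (Fin p) (Fin p) ℂ) (v : Fin p → ℂ) :
    (exp X) *ᵥ v = ∑' n : ℕ, ((n.factorial : ℂ))⁻¹ • ((X ^ n) *ᵥ v) := by
  classical
  let L : Matrix (Fin p) (Fin p) ℂ →ₗ[ℂ] (Fin p → ℂ) :=
    { toFun := fun M => M *ᵥ v
      map_add' := fun A B => Matrix.add_mulVec A B v
      map_smul' := fun c A => Matrix.smul_mulVec c A v }
  have hL : Continuous L := L.continuous_of_finiteDimensional
  have hs : Summable fun n : ℕ => ((n.factorial : ℂ))⁻¹ • X ^ n :=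
    NormedSpace.expSeries_summable' (𝕂 := ℂ) X
  have := (hs.hasSum.map (L.toContinuousLinearMap) (L.toContinuousLinearMap.continuous)).tsum_eq
  rw [exp_eq_tsum (𝕂 := ℂ)]
  show L (∑' (n : ℕ), (n.factorial : ℂ)⁻¹ • X ^ n) = _
  rw [show L (∑' (n : ℕ), (n.factorial : ℂ)⁻¹ • X ^ n)
      = LinearMap.toContinuousLinearMap L (∑' (n : ℕ), (n.factorial : ℂ)⁻¹ • X ^ n) from rfl,
    ← this]
  refine tsum_congr fun n => ?_
  show L ((n.factorial : ℂ)⁻¹ • X ^ n) = _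
  simp [L, Matrix.smul_mulVec]

-- exp of (scalar • 1)
lemma exp_smul_one (c : ℂ) :
    exp (c • (1 : Matrix (Fin p) (Fin p) ℂ)) = Complex.exp c • 1 := by
  classical
  have h1 : c • (1 : Matrix (Fin p) (Fin p) ℂ) = algebraMap ℂ _ c :=
    (Algebra.algebraMap_eq_smul_one c).symm
  rw [h1]
  have := map_exp (algebraMap ℂ (Matrix (Fin p) (Fin p) ℂ)) (continuous_algebraMap _ _) c
  rw [← Complex.exp_eq_exp_ℂ, Algebra.algebraMap_eq_smul_one] at this
  exact this.symm

-- bound for generalized eigenvectors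
lemma genEig_bound {δ : ℝ} (hδ : 0 < δ) (Tc : Matrix (Fin p) (Fin p) ℂ) (μ : ℂ)
    (hμ : μ.re ≤ -(2*δ)) (v : Fin p → ℂ) (k : ℕ)
    (hv : (((Tc - μ • 1) ^ k) *ᵥ v) = 0) :
    ∃ C : ℝ, 0 ≤ C ∧ ∀ y : ℝ, 0 ≤ y →
      ‖(exp (y • Tc)) *ᵥ v‖ ≤ C * Real.exp (-δ * y) := by
  classical
  set N : Matrix (Fin p) (Fin p) ℂ := Tc - μ • 1 with hN
  refine ⟨∑ n ∈ Finset.range k, δ⁻¹ ^ n * ‖(N ^ n) *ᵥ v‖, by positivity, fun y hy => ?_⟩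
  have hsplit : y • Tc = ((y : ℂ) * μ) • (1 : Matrix (Fin p) (Fin p) ℂ) + (y : ℂ) • N := by
    have hyr : y • Tc = (y:ℂ) • Tc := by
      ext i j; simp [Matrix.smul_apply, Complex.real_smul]
    rw [hyr, hN, smul_sub, smul_smul]; abel
  have hcomm : Commute (((y : ℂ) * μ) • (1 : Matrix (Fin p) (Fin p) ℂ)) ((y : ℂ) • N) := by
    refine Commute.smul_left (Commute.smul_right ?_ _) _
    exact Commute.one_left N
  have hexp : exp (y • Tc) = Complex.exp ((y : ℂ) * μ) • exp ((y : ℂ) • N) := by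
    rw [hsplit, Matrix.exp_add_of_commute _ _ hcomm, exp_smul_one, smul_mul_assoc, one_mul]
  -- expand exp(y • N) *ᵥ v
  have hterm : ∀ n : ℕ, ((n.factorial : ℂ))⁻¹ • ((((y:ℂ) • N) ^ n) *ᵥ v)
      = (((n.factorial : ℝ))⁻¹ * y ^ n) • ((N ^ n) *ᵥ v) := by
    intro n
    rw [smul_pow, Matrix.smul_mulVec, smul_smul]
    have hr : (((n.factorial : ℝ))⁻¹ * y ^ n) • ((N ^ n) *ᵥ v)
        = ((((n.factorial : ℝ))⁻¹ * y ^ n : ℝ) : ℂ) • ((N ^ n) *ᵥ v) := by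
      ext i; simp [Complex.real_smul]
    rw [hr]
    congr 1
    push_cast
    ring
  have hzero : ∀ n : ℕ, k ≤ n → (((n.factorial : ℝ))⁻¹ * y ^ n) • ((N ^ n) *ᵥ v) = 0 := by
    intro n hn
    have : (N ^ n) *ᵥ v = 0 := by
      have : N ^ n = N ^ (n - k) * N ^ k := by rw [← pow_add]; congr 1; omega
      rw [this, ← Matrix.mulVec_mulVec, hv, Matrix.mulVec_zero]
    rw [this, smul_zero]
  have hsum : (exp ((y:ℂ) • N)) *ᵥ v
      = ∑ n ∈ Finset.range k, (((n.factorial : ℝ))⁻¹ * y ^ n) • ((N ^ n) *ᵥ v) := by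
    rw [exp_mulVec]
    rw [tsum_congr hterm]
    exact tsum_eq_sum (fun n hn => hzero n (by simpa using hn))
  have habs : ‖Complex.exp ((y:ℂ) * μ)‖ = Real.exp (y * μ.re) := by
    rw [Complex.norm_exp]
    norm_num [Complex.mul_re]
  rw [hexp, Matrix.smul_mulVec, norm_smul, habs, hsum]
  have hpow : ∀ n ∈ Finset.range k,
      ‖(((n.factorial : ℝ))⁻¹ * y ^ n) • ((N ^ n) *ᵥ v)‖
        ≤ (δ⁻¹ ^ n * ‖(N ^ n) *ᵥ v‖) * Real.exp (δ * y) := by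
    intro n _
    rw [norm_smul]
    have h1 : ‖((n.factorial : ℝ))⁻¹ * y ^ n‖ = ((n.factorial : ℝ))⁻¹ * y ^ n := by
      rw [Real.norm_eq_abs, abs_of_nonneg (by positivity)]
    rw [h1]
    have key : ((n.factorial : ℝ))⁻¹ * y ^ n ≤ δ⁻¹ ^ n * Real.exp (δ * y) := by
      have h2 : (δ * y) ^ n / (n.factorial : ℝ) ≤ Real.exp (δ * y) := by
        calc (δ * y) ^ n / (n.factorial : ℝ)
            ≤ ∑ i ∈ Finset.range (n+1), (δ * y) ^ i / (i.factorial : ℝ) := by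
              exact Finset.single_le_sum (f := fun i => (δ*y)^i / (i.factorial : ℝ))
                (fun i _ => by positivity) (Finset.self_mem_range_succ n)
          _ ≤ Real.exp (δ * y) := Real.sum_le_exp_of_nonneg (by positivity) _
      have h3 : ((n.factorial : ℝ))⁻¹ * y ^ n = δ⁻¹ ^ n * ((δ * y) ^ n / (n.factorial : ℝ)) := by
        field_simp [mul_pow]
        rw [← mul_pow, one_div, ← mul_assoc, inv_mul_cancel₀ hδ.ne', one_mul]
      rw [h3]
      exact mul_le_mul_of_nonneg_left h2 (by positivity)
    calc ((n.factorial : ℝ))⁻¹ * y ^ n * ‖(N ^ n) *ᵥ v‖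
        ≤ (δ⁻¹ ^ n * Real.exp (δ * y)) * ‖(N ^ n) *ᵥ v‖ :=
          mul_le_mul_of_nonneg_right key (norm_nonneg _)
      _ = (δ⁻¹ ^ n * ‖(N ^ n) *ᵥ v‖) * Real.exp (δ * y) := by ring
  calc Real.exp (y * μ.re) * ‖∑ n ∈ Finset.range k, (((n.factorial : ℝ))⁻¹ * y ^ n) • ((N ^ n) *ᵥ v)‖
      ≤ Real.exp (y * μ.re) * ∑ n ∈ Finset.range k,
          (δ⁻¹ ^ n * ‖(N ^ n) *ᵥ v‖) * Real.exp (δ * y) := by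
        refine mul_le_mul_of_nonneg_left ?_ (Real.exp_nonneg _)
        exact (norm_sum_le _ _).trans (Finset.sum_le_sum hpow)
    _ = (∑ n ∈ Finset.range k, δ⁻¹ ^ n * ‖(N ^ n) *ᵥ v‖) * (Real.exp (y * μ.re) * Real.exp (δ * y)) := by
        rw [← Finset.sum_mul]; ring
    _ ≤ (∑ n ∈ Finset.range k, δ⁻¹ ^ n * ‖(N ^ n) *ᵥ v‖) * Real.exp (-δ * y) := by
        refine mul_le_mul_of_nonneg_left ?_ (by positivity)
        rw [← Real.exp_add]
        refine Real.exp_le_exp.2 ?_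
        have : y * μ.re ≤ y * (-(2*δ)) := by
          exact mul_le_mul_of_nonneg_left hμ hy
        nlinarith

-- uniform bound over all vectors
lemma all_vec_bound (Tc : Matrix (Fin p) (Fin p) ℂ)
    (heig : ∀ z ∈ spectrum ℂ Tc, z.re < 0) :
    ∃ δ : ℝ, 0 < δ ∧ ∀ v : Fin p → ℂ, ∃ C : ℝ, 0 ≤ C ∧ ∀ y : ℝ, 0 ≤ y →
      ‖(exp (y • Tc)) *ᵥ v‖ ≤ C * Real.exp (-δ * y) := by
  classical
  -- choose δ
  obtain ⟨δ, hδ, hδ2⟩ : ∃ δ : ℝ, 0 < δ ∧ ∀ z ∈ spectrum ℂ Tc, z.re ≤ -(2*δ) := by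
    rcases Set.eq_empty_or_nonempty (spectrum ℂ Tc) with h | h
    · exact ⟨1, one_pos, fun z hz => absurd hz (by simp [h])⟩
    · obtain ⟨a, ha, hmax⟩ := Set.exists_max_image (spectrum ℂ Tc) Complex.re
        (Matrix.finite_spectrum Tc) h
      refine ⟨-a.re / 2, by linarith [heig a ha], fun z hz => ?_⟩
      have := hmax z hz
      linarith
  refine ⟨δ, hδ, fun v => ?_⟩
  set f : Module.End ℂ (Fin p → ℂ) := Matrix.toLinAlgEquiv' Tc with hf
  have htop : v ∈ ⨆ μ : ℂ, f.maxGenEigenspace μ := by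
    rw [Module.End.iSup_maxGenEigenspace_eq_top]; trivial
  refine Submodule.iSup_induction (motive := fun v => ∃ C : ℝ, 0 ≤ C ∧ ∀ y : ℝ, 0 ≤ y →
      ‖(exp (y • Tc)) *ᵥ v‖ ≤ C * Real.exp (-δ * y)) _ htop ?_ ?_ ?_
  · intro μ w hw
    rcases eq_or_ne w 0 with rfl | hw0
    · exact ⟨0, le_refl _, fun y hy => by simp [Matrix.mulVec_zero]⟩
    · -- μ is an eigenvalue
      have hspec : μ ∈ spectrum ℂ Tc := by
        have h1 : f.HasGenEigenvalue μ (Module.finrank ℂ (Fin p → ℂ)) := by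
          rw [Module.End.hasGenEigenvalue_iff]
          intro hbot
          rw [Module.End.maxGenEigenspace_eq_genEigenspace_finrank] at hw
          rw [hbot] at hw
          exact hw0 hw
        have h2 := Module.End.hasEigenvalue_of_hasGenEigenvalue h1
        rw [Module.End.hasEigenvalue_iff_mem_spectrum] at h2
        rwa [hf, AlgEquiv.spectrum_eq] at h2
      obtain ⟨k, hk⟩ := (Module.End.mem_maxGenEigenspace f μ w).1 hw
      have hk' : ((Tc - μ • 1) ^ k) *ᵥ w = 0 := by
        have : (f - μ • 1) ^ k = Matrix.toLinAlgEquiv' ((Tc - μ • 1) ^ k) := by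
          rw [map_pow, map_sub, _root_.map_smul, _root_.map_one]
        rw [this] at hk
        rwa [Matrix.toLinAlgEquiv'_apply] at hk
      exact genEig_bound hδ Tc μ (hδ2 μ hspec) w k hk'
  · exact ⟨0, le_refl _, fun y hy => by simp [Matrix.mulVec_zero]⟩
  · rintro x z ⟨C1, hC1, h1⟩ ⟨C2, hC2, h2⟩
    refine ⟨C1 + C2, by linarith, fun y hy => ?_⟩
    rw [Matrix.mulVec_add]
    calc ‖(exp (y • Tc)) *ᵥ x + (exp (y • Tc)) *ᵥ z‖
        ≤ ‖(exp (y • Tc)) *ᵥ x‖ + ‖(exp (y • Tc)) *ᵥ z‖ := norm_add_le _ _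
      _ ≤ C1 * Real.exp (-δ * y) + C2 * Real.exp (-δ * y) := add_le_add (h1 y hy) (h2 y hy)
      _ = (C1 + C2) * Real.exp (-δ * y) := by ring

-- entry bound for the real matrix exponential
lemma exp_entry_bound (T : Matrix (Fin p) (Fin p) ℝ)
    (heig : ∀ z ∈ spectrum ℂ (T.map (algebraMap ℝ ℂ)), z.re < 0) :
    ∃ δ C : ℝ, 0 < δ ∧ 0 ≤ C ∧ ∀ y : ℝ, 0 ≤ y → ∀ i j,
      |NormedSpace.exp (y • T) i j| ≤ C * Real.exp (-δ * y) := by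
  classical
  set Tc : Matrix (Fin p) (Fin p) ℂ := T.map (algebraMap ℝ ℂ) with hTc
  obtain ⟨δ, hδ, hbd⟩ := all_vec_bound Tc heig
  choose C hC0 hCb using hbd
  refine ⟨δ, ∑ j : Fin p, C (Pi.single j 1), hδ, Finset.sum_nonneg fun j _ => hC0 _,
    fun y hy i j => ?_⟩
  have hcont : Continuous (⇑((algebraMap ℝ ℂ).mapMatrix :
      Matrix (Fin p) (Fin p) ℝ →+* Matrix (Fin p) (Fin p) ℂ)) := by
    show Continuous fun M : Matrix (Fin p) (Fin p) ℝ => M.map (algebraMap ℝ ℂ)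
    exact continuous_pi fun i => continuous_pi fun j =>
      Complex.continuous_ofReal.comp ((continuous_apply j).comp (continuous_apply i))
  have hmap : (NormedSpace.exp (y • T)).map (algebraMap ℝ ℂ)
      = NormedSpace.exp ((y • T).map (algebraMap ℝ ℂ)) := by
    have := map_exp ((algebraMap ℝ ℂ).mapMatrix :
      Matrix (Fin p) (Fin p) ℝ →+* Matrix (Fin p) (Fin p) ℂ) hcont (y • T)
    simp only [RingHom.mapMatrix_apply] at this
    exact this
  have hsm : (y • T).map (algebraMap ℝ ℂ) = y • Tc := by
    ext i j
    simp [hTc, Matrix.map_apply, Complex.real_smul]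
  have hRC : NormedSpace.exp (y • Tc) = NormedSpace.exp (y • Tc) :=
    rfl
  have hentry : ((NormedSpace.exp (y • T)).map (algebraMap ℝ ℂ)) i j
      = NormedSpace.exp (y • Tc) i j := by rw [hmap, hsm, hRC]
  have habs : |NormedSpace.exp (y • T) i j| = ‖NormedSpace.exp (y • Tc) i j‖ := by
    rw [← hentry]
    simp [Matrix.map_apply]
  rw [habs]
  have hcol : NormedSpace.exp (y • Tc) i j
      = ((NormedSpace.exp (y • Tc)) *ᵥ Pi.single j 1) i := by
    rw [Matrix.mulVec_single]
    simp
  rw [hcol]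
  calc ‖((NormedSpace.exp (y • Tc)) *ᵥ Pi.single j 1) i‖
      ≤ ‖(NormedSpace.exp (y • Tc)) *ᵥ Pi.single j 1‖ := norm_le_pi_norm _ i
    _ ≤ C (Pi.single j 1) * Real.exp (-δ * y) := hCb _ y hy
    _ ≤ (∑ j' : Fin p, C (Pi.single j' 1)) * Real.exp (-δ * y) := by
        refine mul_le_mul_of_nonneg_right ?_ (Real.exp_nonneg _)
        exact Finset.single_le_sum (f := fun j' => C (Pi.single j' 1))
          (fun j' _ => hC0 _) (Finset.mem_univ j)


lemma ph_tail_bound (piv : Fin p → ℝ) (T : Matrix (Fin p) (Fin p) ℝ)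
    (heig : ∀ z ∈ spectrum ℂ (T.map (algebraMap ℝ ℂ)), z.re < 0) :
    ∃ δ C : ℝ, 0 < δ ∧ 0 ≤ C ∧ ∀ s : ℝ, 0 ≤ s →
      phMeasure piv T (Set.Ioi s) ≤ ENNReal.ofReal (C * Real.exp (-δ * s)) := by
  classical
  obtain ⟨δ, C, hδ, hC, hent⟩ := exp_entry_bound T heig
  set D : ℝ := (∑ i, ∑ j, |piv i| * |∑ k, T j k|) * C with hD
  have hD0 : 0 ≤ D := by
    refine mul_nonneg (Finset.sum_nonneg fun i _ => Finset.sum_nonneg fun j _ => ?_) hC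
    positivity
  have hdens : ∀ y : ℝ, 0 ≤ y → |phDens piv T y| ≤ D * Real.exp (-δ * y) := by
    intro y hy
    calc |phDens piv T y|
        ≤ ∑ i, |∑ j, piv i * NormedSpace.exp (y • T) i j * (-∑ k, T j k)| :=
          Finset.abs_sum_le_sum_abs _ _
      _ ≤ ∑ i, ∑ j, |piv i * NormedSpace.exp (y • T) i j * (-∑ k, T j k)| :=
          Finset.sum_le_sum fun i _ => Finset.abs_sum_le_sum_abs _ _
      _ ≤ ∑ i, ∑ j, |piv i| * |∑ k, T j k| * (C * Real.exp (-δ * y)) := by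
          refine Finset.sum_le_sum fun i _ => Finset.sum_le_sum fun j _ => ?_
          rw [abs_mul, abs_mul, abs_neg]
          calc |piv i| * |NormedSpace.exp (y • T) i j| * |∑ k, T j k|
              ≤ |piv i| * (C * Real.exp (-δ * y)) * |∑ k, T j k| := by
                refine mul_le_mul_of_nonneg_right ?_ (abs_nonneg _)
                exact mul_le_mul_of_nonneg_left (hent y hy i j) (abs_nonneg _)
            _ = |piv i| * |∑ k, T j k| * (C * Real.exp (-δ * y)) := by ring
      _ = D * Real.exp (-δ * y) := by
          rw [hD, Finset.sum_mul, Finset.sum_mul]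
          refine Finset.sum_congr rfl fun i _ => ?_
          rw [Finset.sum_mul, Finset.sum_mul]
          exact Finset.sum_congr rfl fun j _ => by ring
  refine ⟨δ, D / δ, hδ, by positivity, fun s hs => ?_⟩
  rw [phMeasure, withDensity_apply _ measurableSet_Ioi]
  have hb : ∀ y ∈ Set.Ioi s, (if 0 < y then ENNReal.ofReal (phDens piv T y) else 0)
      ≤ ENNReal.ofReal (D * Real.exp (-δ * y)) := by
    intro y hy
    have hy0 : 0 ≤ y := le_of_lt (lt_of_le_of_lt hs hy)
    split_ifs
    · exact ENNReal.ofReal_le_ofReal ((le_abs_self _).trans (hdens y hy0))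
    · exact zero_le
  calc ∫⁻ y in Set.Ioi s, (if 0 < y then ENNReal.ofReal (phDens piv T y) else 0)
      ≤ ∫⁻ y in Set.Ioi s, ENNReal.ofReal (D * Real.exp (-δ * y)) :=
        setLIntegral_mono' measurableSet_Ioi hb
    _ = ENNReal.ofReal (∫ y in Set.Ioi s, D * Real.exp (-δ * y)) := by
        rw [MeasureTheory.ofReal_integral_eq_lintegral_ofReal]
        · exact ((exp_neg_integrableOn_Ioi s hδ).const_mul D)
        · exact Filter.Eventually.of_forall fun y => by positivity
    _ = ENNReal.ofReal (D / δ * Real.exp (-δ * s)) := by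
        congr 1
        rw [MeasureTheory.integral_const_mul]
        have := MeasureTheory.integral_comp_mul_left_Ioi (fun x => Real.exp (-x)) s hδ
        simp only [neg_mul, smul_eq_mul] at this ⊢
        rw [this, integral_exp_neg_Ioi]
        ring

end CPHmatrix

namespace CPHaux

lemma ratio_nonneg (μ' : Measure ℝ) (l x : ℝ) :
    0 ≤ (μ' (Set.Ioi (l * x))).toReal / (μ' (Set.Ioi x)).toReal :=
  div_nonneg ENNReal.toReal_nonneg ENNReal.toReal_nonneg

lemma bdd_below (μ' : Measure ℝ) (l : ℝ) :
    IsBoundedUnder (· ≥ ·) atTop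
      (fun x => (μ' (Set.Ioi (l * x))).toReal / (μ' (Set.Ioi x)).toReal) :=
  isBoundedUnder_of ⟨0, fun x => ratio_nonneg μ' l x⟩

/-- The key abstract lemma. -/
lemma key (μV ν μ : Measure ℝ) [IsProbabilityMeasure μV] [IsProbabilityMeasure ν]
    (hν0 : ν (Set.Iic 0) = 0)
    (hexp : ∃ δ C : ℝ, 0 < δ ∧ 0 ≤ C ∧ ∀ s : ℝ, 0 ≤ s →
      ν (Set.Ioi s) ≤ ENNReal.ofReal (C * Real.exp (-δ * s)))
    (htail : ∀ x : ℝ, μ (Set.Ioi x) = ∫⁻ y in Set.Ioi 0, μV (Set.Ioi (x / y)) ∂ν)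
    (hV : IntRegVary μV) : IntRegVary μ := by
  classical
  obtain ⟨δ, C, hδ, hC, hνexp⟩ := hexp
  set G : ℝ → ℝ≥0∞ := fun u => μV (Set.Ioi u) with hGdef
  set F : ℝ → ℝ≥0∞ := fun x => μ (Set.Ioi x) with hFdef
  have hGfin : ∀ u, G u ≠ ∞ := fun u => (measure_lt_top μV _).ne
  have hG1 : ∀ u, G u ≤ 1 := fun u => prob_le_one
  have hF1 : ∀ x, F x ≤ 1 := by
    intro x
    rw [hFdef]
    dsimp only
    rw [htail x]
    calc ∫⁻ y in Set.Ioi 0, μV (Set.Ioi (x / y)) ∂ν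
        ≤ ∫⁻ _ in Set.Ioi 0, 1 ∂ν := setLIntegral_mono' measurableSet_Ioi fun y _ => prob_le_one
      _ = ν (Set.Ioi 0) := setLIntegral_one _
      _ ≤ 1 := prob_le_one
  have hFfin : ∀ x, F x ≠ ∞ := fun x => (lt_of_le_of_lt (hF1 x) ENNReal.one_lt_top).ne
  -- ν gives mass ≥ 1/2 to some [y₀, ∞)
  obtain ⟨y₀, hy₀, hνy₀⟩ : ∃ y₀ : ℝ, 0 < y₀ ∧ (1/2 : ℝ≥0∞) ≤ ν (Set.Ici y₀) := by
    by_contra h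
    push_neg at h
    have hmono : Monotone fun n : ℕ => Set.Ici (((n:ℝ)+1)⁻¹) := by
      intro a b hab
      refine Set.Ici_subset_Ici.2 ?_
      have h1 : (0:ℝ) < (a:ℝ)+1 := by positivity
      exact inv_anti₀ h1 (by exact_mod_cast by omega)
    have hunion : (⋃ n : ℕ, Set.Ici (((n:ℝ)+1)⁻¹)) = Set.Ioi (0:ℝ) := by
      ext t
      simp only [Set.mem_iUnion, Set.mem_Ici, Set.mem_Ioi]
      constructor
      · rintro ⟨n, hn⟩
        exact lt_of_lt_of_le (by positivity) hn
      · intro ht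
        obtain ⟨n, hn⟩ := exists_nat_gt t⁻¹
        refine ⟨n, ?_⟩
        rw [inv_le_comm₀ (by positivity) ht]
        exact le_of_lt (lt_of_lt_of_le hn (by linarith))
    have h1 : ν (Set.Ioi (0:ℝ)) = 1 := by
      have := measure_add_measure_compl (μ := ν) (measurableSet_Iic (a := (0:ℝ)))
      rw [hν0, zero_add, Set.compl_Iic] at this
      rw [this, measure_univ]
    have h2 : ν (Set.Ioi (0:ℝ)) = ⨆ n : ℕ, ν (Set.Ici (((n:ℝ)+1)⁻¹)) := by
      rw [← hunion]
      exact hmono.measure_iUnion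
    have h3 : (⨆ n : ℕ, ν (Set.Ici (((n:ℝ)+1)⁻¹))) ≤ 1/2 :=
      iSup_le fun n => le_of_lt (h _ (by positivity))
    rw [h1] at h2
    rw [← h2] at h3
    norm_num at h3
  -- lower bound on F via a fixed window of ν
  have hFlow : ∀ x : ℝ, 0 ≤ x → G (x / y₀) * ν (Set.Ici y₀) ≤ F x := by
    intro x hx
    rw [hFdef]; dsimp only; rw [htail x]
    calc G (x / y₀) * ν (Set.Ici y₀) = ∫⁻ _ in Set.Ici y₀, G (x / y₀) ∂ν := by
          rw [setLIntegral_const]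
      _ ≤ ∫⁻ y in Set.Ici y₀, μV (Set.Ioi (x / y)) ∂ν := by
          refine setLIntegral_mono' measurableSet_Ici fun y hy => ?_
          refine measure_mono (Set.Ioi_subset_Ioi ?_)
          exact div_le_div_of_nonneg_left hx hy₀ hy
      _ ≤ ∫⁻ y in Set.Ioi 0, μV (Set.Ioi (x / y)) ∂ν := by
          refine lintegral_mono_set fun y hy => ?_
          exact lt_of_lt_of_le hy₀ hy
  -- Part B: there is l₀ > 1 whose liminf-ratio exceeds 1/2
  have h12' := hV.eventually (eventually_gt_nhds (by norm_num : (1:ℝ)/2 < 1))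
  obtain ⟨l₀, hLV₀, hl₀⟩ := (h12'.and self_mem_nhdsWithin).exists
  have hl₀ : 1 < l₀ := hl₀
  have hstep := eventually_lt_of_lt_liminf hLV₀
    (isBoundedUnder_of ⟨0, fun x => div_nonneg ENNReal.toReal_nonneg ENNReal.toReal_nonneg⟩)
  obtain ⟨x₀, hx₀⟩ := eventually_atTop.1 hstep
  set x₁ : ℝ := max x₀ 1 with hx₁def
  have hx₁1 : (1:ℝ) ≤ x₁ := le_max_right _ _
  have hx₁pos : (0:ℝ) < x₁ := lt_of_lt_of_le one_pos hx₁1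
  have hstep' : ∀ x, x₁ ≤ x → (1:ℝ)/2 < (μV (Set.Ioi (l₀ * x))).toReal / (μV (Set.Ioi x)).toReal :=
    fun x hx => hx₀ x (le_trans (le_max_left _ _) hx)
  have hG2 : ∀ x, (1:ℝ)/2 < (μV (Set.Ioi (l₀ * x))).toReal / (μV (Set.Ioi x)).toReal →
      0 < (G x).toReal ∧ 1/2 * (G x).toReal < (G (l₀ * x)).toReal := by
    intro x h
    rcases eq_or_lt_of_le (ENNReal.toReal_nonneg : 0 ≤ (G x).toReal) with h0 | h0
    · exfalso
      rw [hGdef] at h0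
      dsimp only at h0
      rw [← h0, div_zero] at h
      norm_num at h
    · exact ⟨h0, (lt_div_iff₀ h0).1 h⟩
  have hiter : ∀ n : ℕ, (1/2:ℝ)^n * (G x₁).toReal ≤ (G (x₁ * l₀^n)).toReal := by
    intro n
    induction n with
    | zero => simp
    | succ n ih =>
        have hx : x₁ ≤ x₁ * l₀^n :=
          le_mul_of_one_le_right hx₁pos.le (one_le_pow₀ hl₀.le)
        have h2 := (hG2 _ (hstep' _ hx)).2
        calc (1/2:ℝ)^(n+1) * (G x₁).toReal = (1/2) * ((1/2:ℝ)^n * (G x₁).toReal) := by ring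
          _ ≤ 1/2 * (G (x₁ * l₀^n)).toReal :=
              mul_le_mul_of_nonneg_left ih (by norm_num)
          _ ≤ (G (l₀ * (x₁ * l₀^n))).toReal := le_of_lt h2
          _ = (G (x₁ * l₀^(n+1))).toReal := by rw [show l₀ * (x₁ * l₀^n) = x₁ * l₀^(n+1) by ring]
  have hGx₁pos : 0 < (G x₁).toReal := (hG2 _ (hstep' x₁ le_rfl)).1
  set K : ℝ := Real.log 2 / Real.log l₀ with hKdef
  have hK0 : 0 < K := div_pos (Real.log_pos one_lt_two) (Real.log_pos hl₀)
  set c₁ : ℝ := (G x₁).toReal / 2 with hc₁def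
  have hc₁ : 0 < c₁ := by positivity
  have hpoly : ∀ u, x₁ ≤ u → c₁ * u ^ (-K) ≤ (G u).toReal := by
    intro u hu
    have hu0 : 0 < u := lt_of_lt_of_le hx₁pos hu
    have hux : 1 ≤ u / x₁ := (one_le_div hx₁pos).2 hu
    set n := Nat.floor (Real.logb l₀ (u/x₁)) with hn
    have hlb0 : 0 ≤ Real.logb l₀ (u/x₁) := Real.logb_nonneg hl₀ hux
    have hlt : Real.logb l₀ (u/x₁) < (n:ℝ)+1 := Nat.lt_floor_add_one _
    have hule : u ≤ x₁ * l₀ ^ (n+1) := by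
      have h1 : u / x₁ < l₀ ^ (((n:ℕ)+1:ℕ):ℝ) :=
        (Real.logb_lt_iff_lt_rpow hl₀ (by positivity)).1 (by exact_mod_cast hlt)
      rw [Real.rpow_natCast] at h1
      have := (div_lt_iff₀ hx₁pos).1 h1
      linarith [this]
    have hmono : (G (x₁ * l₀ ^ (n+1))).toReal ≤ (G u).toReal :=
      ENNReal.toReal_mono (hGfin u) (measure_mono (Set.Ioi_subset_Ioi hule))
    have h2 : (1/2:ℝ)^(n+1) * (G x₁).toReal ≤ (G u).toReal := (hiter (n+1)).trans hmono
    have hn_le : (n:ℝ) ≤ Real.logb l₀ u := by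
      calc (n:ℝ) ≤ Real.logb l₀ (u/x₁) := Nat.floor_le hlb0
        _ ≤ Real.logb l₀ u := by
            exact Real.logb_le_logb_of_le hl₀ (by positivity) (div_le_self hu0.le hx₁1)
    have hrw : u ^ (-K) = (1/2:ℝ) ^ (Real.logb l₀ u) := by
      rw [Real.rpow_def_of_pos hu0, Real.rpow_def_of_pos (by norm_num : (0:ℝ) < 1/2)]
      congr 1
      rw [show (1:ℝ)/2 = 2⁻¹ by norm_num, Real.log_inv, Real.logb, hKdef]
      ring
    have hmono2 : (1/2:ℝ) ^ (Real.logb l₀ u) ≤ (1/2:ℝ) ^ ((n:ℝ)) :=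
      Real.rpow_le_rpow_of_exponent_ge (by norm_num) (by norm_num) hn_le
    have hnat : (1/2:ℝ) ^ ((n:ℝ)) = (1/2:ℝ)^(n:ℕ) := Real.rpow_natCast _ n
    calc c₁ * u ^ (-K) ≤ c₁ * (1/2:ℝ)^(n:ℕ) := by
          refine mul_le_mul_of_nonneg_left ?_ hc₁.le
          rw [hrw]
          rw [← hnat]
          exact hmono2
      _ = (1/2:ℝ)^(n+1) * (G x₁).toReal := by
          rw [hc₁def]
          rw [pow_succ]
          ring
      _ ≤ (G u).toReal := h2
  have hGpos : ∀ u, x₁ ≤ u → 0 < (G u).toReal := by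
    intro u hu
    have hu0 : 0 < u := lt_of_lt_of_le hx₁pos hu
    exact lt_of_lt_of_le (by positivity) (hpoly u hu)
  have hν12 : (1/2:ℝ) ≤ (ν (Set.Ici y₀)).toReal := by
    have h := ENNReal.toReal_mono (measure_ne_top ν _) hνy₀
    simpa using h
  -- positivity of F eventually
  have hFpos : ∀ x, x₁ * y₀ ≤ x → 0 < (F x).toReal := by
    intro x hx
    have hx0 : 0 ≤ x := le_trans (by positivity) hx
    have hxy : x₁ ≤ x / y₀ := (le_div_iff₀ hy₀).2 hx
    have h1 := hFlow x hx0
    have h2 : (G (x/y₀) * ν (Set.Ici y₀)).toReal ≤ (F x).toReal :=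
      ENNReal.toReal_mono (hFfin x) h1
    rw [ENNReal.toReal_mul] at h2
    refine lt_of_lt_of_le ?_ h2
    exact mul_pos (hGpos _ hxy) (lt_of_lt_of_le (by norm_num) hν12)
  -- Part K4 : the error term tends to zero
  have hK4 : ∀ U : ℝ, 0 < U →
      Tendsto (fun x => (ν (Set.Ioi (x/U))).toReal / (F x).toReal) atTop (𝓝 0) := by
    intro U hU
    set β : ℝ := δ / U with hβdef
    have hβ : 0 < β := by positivity
    set M : ℝ := 2*C/(c₁ * y₀ ^ K) with hMdef
    have hy₀K : (0:ℝ) < y₀ ^ K := Real.rpow_pos_of_pos hy₀ K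
    refine squeeze_zero' (g := fun x => M * (x ^ K * Real.exp (-β * x)))
      (Filter.Eventually.of_forall fun x => div_nonneg ENNReal.toReal_nonneg ENNReal.toReal_nonneg)
      ?_ ?_
    · filter_upwards [eventually_ge_atTop (max (x₁ * y₀) 1)] with x hx
      have hx1 : (1:ℝ) ≤ x := le_trans (le_max_right _ _) hx
      have hx0 : 0 < x := lt_of_lt_of_le one_pos hx1
      have hxx₁ : x₁ * y₀ ≤ x := le_trans (le_max_left _ _) hx
      have hxy : x₁ ≤ x / y₀ := (le_div_iff₀ hy₀).2 hxx₁
      have hnum : (ν (Set.Ioi (x/U))).toReal ≤ C * Real.exp (-β * x) := by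
        have h := hνexp (x/U) (by positivity)
        have h2 := ENNReal.toReal_le_of_le_ofReal (by positivity) h
        rw [show -δ * (x/U) = -β * x by rw [hβdef]; field_simp] at h2
        exact h2
      have hden : c₁ * (x/y₀) ^ (-K) * (1/2) ≤ (F x).toReal := by
        have h1 := hFlow x hx0.le
        have h2 : (G (x/y₀) * ν (Set.Ici y₀)).toReal ≤ (F x).toReal :=
          ENNReal.toReal_mono (hFfin x) h1
        rw [ENNReal.toReal_mul] at h2
        refine le_trans ?_ h2
        have := hpoly _ hxy
        calc c₁ * (x/y₀) ^ (-K) * (1/2) ≤ (G (x/y₀)).toReal * (1/2) :=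
              mul_le_mul_of_nonneg_right (hpoly _ hxy) (by norm_num)
          _ ≤ (G (x/y₀)).toReal * (ν (Set.Ici y₀)).toReal :=
              mul_le_mul_of_nonneg_left hν12 ENNReal.toReal_nonneg
      have hdenb : 0 < c₁ * (x/y₀) ^ (-K) * (1/2) := by
        have : (0:ℝ) < (x/y₀) ^ (-K) := Real.rpow_pos_of_pos (by positivity) _
        positivity
      calc (ν (Set.Ioi (x/U))).toReal / (F x).toReal
          ≤ (C * Real.exp (-β * x)) / (c₁ * (x/y₀) ^ (-K) * (1/2)) :=
            div_le_div₀ (by positivity) hnum hdenb hden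
        _ = M * (x ^ K * Real.exp (-β * x)) := by
            rw [Real.rpow_neg (by positivity), Real.div_rpow hx0.le hy₀.le, hMdef]
            have h3 : (0:ℝ) < x ^ K := Real.rpow_pos_of_pos hx0 K
            field_simp
    · have := (tendsto_rpow_mul_exp_neg_mul_atTop_nhds_zero K β hβ).const_mul M
      simpa using this
  -- Part K5 : lower bound for the liminf of μ
  have hK5 : ∀ l : ℝ, 1 < l →
      (1:ℝ)/2 < liminf (fun x => (μV (Set.Ioi (l * x))).toReal / (μV (Set.Ioi x)).toReal) atTop →
      liminf (fun x => (μV (Set.Ioi (l * x))).toReal / (μV (Set.Ioi x)).toReal) atTop ≤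
      liminf (fun x => (μ (Set.Ioi (l * x))).toReal / (μ (Set.Ioi x)).toReal) atTop := by
    intro l hl hLV
    set LV := liminf (fun x => (μV (Set.Ioi (l * x))).toReal / (μV (Set.Ioi x)).toReal) atTop
      with hLVdef
    set Lμ := liminf (fun x => (μ (Set.Ioi (l * x))).toReal / (μ (Set.Ioi x)).toReal) atTop
      with hLμdef
    -- eventual upper bound for the μ-ratio
    have hRle1 : ∀ᶠ x in atTop, (μ (Set.Ioi (l * x))).toReal / (μ (Set.Ioi x)).toReal ≤ 1 := by
      filter_upwards [eventually_ge_atTop (max (x₁ * y₀) 1)] with x hx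
      have hx1 : (1:ℝ) ≤ x := le_trans (le_max_right _ _) hx
      have hxx₁ : x₁ * y₀ ≤ x := le_trans (le_max_left _ _) hx
      have hFx : 0 < (F x).toReal := hFpos x hxx₁
      have hmono : (μ (Set.Ioi (l * x))).toReal ≤ (μ (Set.Ioi x)).toReal := by
        refine ENNReal.toReal_mono (hFfin x) (measure_mono (Set.Ioi_subset_Ioi ?_))
        nlinarith
      rw [div_le_one hFx]
      exact hmono
    have hbddle : IsBoundedUnder (· ≤ ·) atTop
        (fun x => (μ (Set.Ioi (l * x))).toReal / (μ (Set.Ioi x)).toReal) :=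
      isBoundedUnder_of_eventually_le hRle1
    have hLμ0 : 0 ≤ Lμ := by
      rw [hLμdef]
      refine le_liminf_of_le hbddle.isCoboundedUnder_ge ?_
      exact Filter.Eventually.of_forall fun x => ratio_nonneg μ l x
    have hmain : ∀ b : ℝ, 0 < b → b < LV → b ≤ Lμ := by
      intro b hb hbLV
      have hEv := eventually_lt_of_lt_liminf hbLV
        (isBoundedUnder_of ⟨0, fun x => ratio_nonneg μV l x⟩)
      obtain ⟨U₀, hU₀⟩ := eventually_atTop.1 hEv
      set U : ℝ := max U₀ 1 with hUdef
      have hU : 0 < U := lt_of_lt_of_le one_pos (le_max_right _ _)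
      have hGstep : ∀ u, U ≤ u → ENNReal.ofReal b * G u ≤ G (l * u) := by
        intro u hu
        have h := hU₀ u (le_trans (le_max_left _ _) hu)
        have hd : 0 < (G u).toReal := by
          by_contra hcon
          push_neg at hcon
          have : (G u).toReal = 0 := le_antisymm hcon ENNReal.toReal_nonneg
          rw [hGdef] at this
          dsimp only at this
          rw [this, div_zero] at h
          linarith
        have h2 : b * (G u).toReal ≤ (G (l*u)).toReal := le_of_lt ((lt_div_iff₀ hd).1 h)
        calc ENNReal.ofReal b * G u = ENNReal.ofReal b * ENNReal.ofReal ((G u).toReal) := by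
              rw [ENNReal.ofReal_toReal (hGfin u)]
          _ = ENNReal.ofReal (b * (G u).toReal) := (ENNReal.ofReal_mul hb.le).symm
          _ ≤ G (l * u) := ENNReal.ofReal_le_of_le_toReal h2
      -- the splitting inequality
      have hsplit : ∀ x : ℝ, 0 < x →
          ENNReal.ofReal b * (F x - ν (Set.Ioi (x/U))) ≤ F (l * x) := by
        intro x hx
        have hxU : 0 ≤ x / U := by positivity
        set A : ℝ≥0∞ := ∫⁻ y in Set.Ioc 0 (x/U), μV (Set.Ioi (x / y)) ∂ν with hA
        have hFsplit : F x ≤ A + ν (Set.Ioi (x/U)) := by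
          rw [hFdef]; dsimp only; rw [htail x]
          have hcover : Set.Ioi (0:ℝ) = Set.Ioc 0 (x/U) ∪ Set.Ioi (x/U) :=
            (Set.Ioc_union_Ioi_eq_Ioi hxU).symm
          rw [hcover]
          refine le_trans (lintegral_union_le _ _ _) ?_
          refine add_le_add le_rfl ?_
          calc ∫⁻ y in Set.Ioi (x/U), μV (Set.Ioi (x / y)) ∂ν
              ≤ ∫⁻ _ in Set.Ioi (x/U), 1 ∂ν :=
                setLIntegral_mono' measurableSet_Ioi fun y _ => prob_le_one
            _ = ν (Set.Ioi (x/U)) := setLIntegral_one _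
        have hFl : ENNReal.ofReal b * A ≤ F (l * x) := by
          rw [hFdef]; dsimp only; rw [htail (l*x)]
          calc ENNReal.ofReal b * A
              = ∫⁻ y in Set.Ioc 0 (x/U), ENNReal.ofReal b * μV (Set.Ioi (x / y)) ∂ν := by
                rw [hA, lintegral_const_mul' _ _ ENNReal.ofReal_ne_top]
            _ ≤ ∫⁻ y in Set.Ioc 0 (x/U), μV (Set.Ioi (l * x / y)) ∂ν := by
                refine setLIntegral_mono' measurableSet_Ioc fun y hy => ?_
                have hy0 : 0 < y := hy.1
                have hyU : U ≤ x / y := by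
                  rw [le_div_iff₀ hy0]
                  calc U * y = y * U := by ring
                    _ ≤ (x/U) * U := mul_le_mul_of_nonneg_right hy.2 hU.le
                    _ = x := by field_simp
                have := hGstep (x/y) hyU
                rw [show l * x / y = l * (x/y) by ring] at *
                exact this
            _ ≤ ∫⁻ y in Set.Ioi 0, μV (Set.Ioi (l * x / y)) ∂ν :=
                lintegral_mono_set Set.Ioc_subset_Ioi_self
        refine le_trans ?_ hFl
        refine mul_le_mul_right ?_ _
        exact tsub_le_iff_right.2 hFsplit
      -- convert into the real-valued estimate
      have hEv2 : ∀ᶠ x in atTop,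
          b * (1 - (ν (Set.Ioi (x/U))).toReal / (F x).toReal) ≤
          (μ (Set.Ioi (l * x))).toReal / (μ (Set.Ioi x)).toReal := by
        filter_upwards [eventually_ge_atTop (max (x₁ * y₀) 1)] with x hx
        have hx1 : (1:ℝ) ≤ x := le_trans (le_max_right _ _) hx
        have hx0 : 0 < x := lt_of_lt_of_le one_pos hx1
        have hxx₁ : x₁ * y₀ ≤ x := le_trans (le_max_left _ _) hx
        have hFx : 0 < (F x).toReal := hFpos x hxx₁
        have h1 := hsplit x hx0
        have h2 : b * ((F x).toReal - (ν (Set.Ioi (x/U))).toReal) ≤ (F (l*x)).toReal := by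
          calc b * ((F x).toReal - (ν (Set.Ioi (x/U))).toReal)
              ≤ b * ((F x - ν (Set.Ioi (x/U))).toReal) := by
                refine mul_le_mul_of_nonneg_left ?_ hb.le
                exact ENNReal.le_toReal_sub (measure_ne_top ν _)
            _ = (ENNReal.ofReal b * (F x - ν (Set.Ioi (x/U)))).toReal := by
                rw [ENNReal.toReal_mul, ENNReal.toReal_ofReal hb.le]
            _ ≤ (F (l*x)).toReal := ENNReal.toReal_mono (hFfin _) h1
        have hne : (F x).toReal ≠ 0 := hFx.ne'
        calc b * (1 - (ν (Set.Ioi (x/U))).toReal / (F x).toReal)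
            = b * (((F x).toReal - (ν (Set.Ioi (x/U))).toReal)) / (F x).toReal := by
              field_simp
          _ ≤ (F (l*x)).toReal / (F x).toReal := (div_le_div_iff_of_pos_right hFx).2 h2
          _ = (μ (Set.Ioi (l * x))).toReal / (μ (Set.Ioi x)).toReal := rfl
      -- take liminf
      have hTend : Tendsto (fun x => b * (1 - (ν (Set.Ioi (x/U))).toReal / (F x).toReal))
          atTop (𝓝 b) := by
        have h0 := hK4 U hU
        have : Tendsto (fun x => 1 - (ν (Set.Ioi (x/U))).toReal / (F x).toReal) atTop (𝓝 1) := by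
          have := (tendsto_const_nhds (x := (1:ℝ)) (f := atTop)).sub h0
          simpa using this
        have h2 := this.const_mul b
        simpa using h2
      have hliminfeq : liminf (fun x => b * (1 - (ν (Set.Ioi (x/U))).toReal / (F x).toReal))
          atTop = b := hTend.liminf_eq
      rw [hLμdef, ← hliminfeq]
      refine liminf_le_liminf hEv2 ?_ ?_
      · exact hTend.isBoundedUnder_ge
      · exact hbddle.isCoboundedUnder_ge
    by_contra hcon
    push_neg at hcon
    have hb : 0 < (Lμ + LV)/2 := by linarith
    have := hmain ((Lμ + LV)/2) hb (by linarith)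
    linarith
  -- Part K6 : upper bound for the liminf of μ
  have hK6 : ∀ l : ℝ, 1 < l →
      liminf (fun x => (μ (Set.Ioi (l * x))).toReal / (μ (Set.Ioi x)).toReal) atTop ≤ 1 := by
    intro l hl
    have hRle1 : ∀ᶠ x in atTop, (μ (Set.Ioi (l * x))).toReal / (μ (Set.Ioi x)).toReal ≤ 1 := by
      filter_upwards [eventually_ge_atTop (max (x₁ * y₀) 1)] with x hx
      have hx1 : (1:ℝ) ≤ x := le_trans (le_max_right _ _) hx
      have hxx₁ : x₁ * y₀ ≤ x := le_trans (le_max_left _ _) hx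
      have hFx : 0 < (F x).toReal := hFpos x hxx₁
      have hmono : (μ (Set.Ioi (l * x))).toReal ≤ (μ (Set.Ioi x)).toReal := by
        refine ENNReal.toReal_mono (hFfin x) (measure_mono (Set.Ioi_subset_Ioi ?_))
        nlinarith
      rw [div_le_one hFx]
      exact hmono
    have hbddle : IsBoundedUnder (· ≤ ·) atTop
        (fun x => (μ (Set.Ioi (l * x))).toReal / (μ (Set.Ioi x)).toReal) :=
      isBoundedUnder_of_eventually_le hRle1
    calc liminf (fun x => (μ (Set.Ioi (l * x))).toReal / (μ (Set.Ioi x)).toReal) atTop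
        ≤ liminf (fun _ : ℝ => (1:ℝ)) atTop := by
          refine liminf_le_liminf hRle1 ?_ ?_
          · exact isBoundedUnder_of ⟨0, fun x => ratio_nonneg μ l x⟩
          · exact (isBoundedUnder_of ⟨1, fun _ => le_rfl⟩).isCoboundedUnder_ge
      _ = 1 := liminf_const 1
  -- final squeeze
  rw [IntRegVary]
  refine tendsto_of_tendsto_of_tendsto_of_le_of_le' hV tendsto_const_nhds ?_ ?_
  · filter_upwards [h12', self_mem_nhdsWithin] with l hLVl hl
    exact hK5 l hl hLVl
  · filter_upwards [self_mem_nhdsWithin] with l hl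
    exact hK6 l hl

end CPHaux


/-- if `V ≥ 0` has intermediate regularly varying law and `Y ~ PH(π,T)` is
independent of `V`, then the law of `VY` is also intermediate regularly varying. -/
theorem cph_intRegVary
    {Ω : Type*} [MeasureSpace Ω] [IsProbabilityMeasure (ℙ : Measure Ω)]
    {p : ℕ} (piv : Fin p → ℝ) (T : Matrix (Fin p) (Fin p) ℝ) (hPH : IsPHRepr piv T)
    (V Y : Ω → ℝ) (hVm : Measurable V) (hYm : Measurable Y)
    (hInd : IndepFun V Y ℙ)
    (hVnn : ∀ᵐ ω ∂ℙ, 0 ≤ V ω)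
    (hYlaw : Measure.map Y ℙ = phMeasure piv T)
    (hV : IntRegVary (Measure.map V ℙ)) :
    IntRegVary (Measure.map (fun ω => V ω * Y ω) ℙ) := by
  classical
  set μV : Measure ℝ := Measure.map V ℙ with hμVdef
  set ν : Measure ℝ := Measure.map Y ℙ with hνdef
  haveI : IsProbabilityMeasure μV := Measure.isProbabilityMeasure_map hVm.aemeasurable
  haveI : IsProbabilityMeasure ν := Measure.isProbabilityMeasure_map hYm.aemeasurable
  have hν0 : ν (Set.Iic 0) = 0 := by
    rw [hYlaw, phMeasure, withDensity_apply _ measurableSet_Iic]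
    rw [setLIntegral_congr_fun measurableSet_Iic
      (fun y (hy : y ∈ Set.Iic 0) => if_neg (not_lt.2 hy))]
    simp
  have hexp : ∃ δ C : ℝ, 0 < δ ∧ 0 ≤ C ∧ ∀ s : ℝ, 0 ≤ s →
      ν (Set.Ioi s) ≤ ENNReal.ofReal (C * Real.exp (-δ * s)) := by
    obtain ⟨δ, C, hδ, hC, hb⟩ := CPHmatrix.ph_tail_bound piv T hPH.eig_neg
    exact ⟨δ, C, hδ, hC, fun s hs => by rw [hYlaw]; exact hb s hs⟩
  have hmul : Measurable fun q : ℝ × ℝ => q.1 * q.2 := measurable_fst.mul measurable_snd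
  have hJoint := (ProbabilityTheory.indepFun_iff_map_prod_eq_prod_map_map
    hVm.aemeasurable hYm.aemeasurable).mp hInd
  have hmap : Measure.map (fun ω => V ω * Y ω) ℙ
      = Measure.map (fun q : ℝ × ℝ => q.1 * q.2) (μV.prod ν) := by
    rw [← hJoint, Measure.map_map hmul (hVm.prodMk hYm)]
    rfl
  have hres : ν.restrict (Set.Ioi 0) = ν := by
    refine Measure.restrict_eq_self_of_ae_mem ?_
    rw [MeasureTheory.ae_iff]
    have : {y : ℝ | ¬ y ∈ Set.Ioi (0:ℝ)} = Set.Iic 0 := by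
      ext y; simp [Set.mem_Ioi, Set.mem_Iic, not_lt]
    rw [this]
    exact hν0
  have htail : ∀ x : ℝ, (Measure.map (fun ω => V ω * Y ω) ℙ) (Set.Ioi x)
      = ∫⁻ y in Set.Ioi 0, μV (Set.Ioi (x / y)) ∂ν := by
    intro x
    rw [hmap, Measure.map_apply hmul measurableSet_Ioi,
      Measure.prod_apply_symm (hmul measurableSet_Ioi)]
    rw [show (∫⁻ y, μV ((fun v => (v, y)) ⁻¹' ((fun q : ℝ × ℝ => q.1 * q.2) ⁻¹' Set.Ioi x)) ∂ν)
        = ∫⁻ y in Set.Ioi 0,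
            μV ((fun v => (v, y)) ⁻¹' ((fun q : ℝ × ℝ => q.1 * q.2) ⁻¹' Set.Ioi x)) ∂ν by
      rw [hres]]
    refine setLIntegral_congr_fun measurableSet_Ioi
      (fun y (hy : y ∈ Set.Ioi 0) => ?_)
    congr 1
    ext v
    simp only [Set.mem_preimage, Set.mem_Ioi, Set.mem_setOf_eq]
    exact (div_lt_iff₀ hy).symm
  exact CPHaux.key μV ν _ hν0 hexp htail hV
end
end

section
/- Let V be a nonnegative random variable with distribution function F_V and let Y ~ PH(π,T) be a phase-type distributed random variable independent of V. If F_V is long-tailed (F_V ∈ L), then the distribution F_{VY} of the product VY is also long-tailed. -/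
open MeasureTheory ProbabilityTheory Filter Matrix Set
open scoped Topology ENNReal

noncomputable section

section CPHAuxSection
open NormedSpace
namespace CPHAux
variable {p : ℕ}

/-- weighted row functional as a linear map -/
def vecL (i : Fin p) (w : Fin p → ℝ) : Matrix (Fin p) (Fin p) ℝ →ₗ[ℝ] ℝ where
  toFun M := ∑ j, M i j * w j
  map_add' M N := by
    simp [Matrix.add_apply, add_mul, Finset.sum_add_distrib]
  map_smul' c M := by
    simp [Matrix.smul_apply, Finset.mul_sum, mul_assoc, smul_eq_mul]

lemma clm_apply_exp (L : Matrix (Fin p) (Fin p) ℝ →ₗ[ℝ] ℝ) (A : Matrix (Fin p) (Fin p) ℝ) :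
    L (exp A) = ∑' n : ℕ, ((n.factorial : ℝ)⁻¹) * L (A ^ n) := by
  letI : SeminormedRing (Matrix (Fin p) (Fin p) ℝ) := Matrix.linftyOpSemiNormedRing
  letI : NormedRing (Matrix (Fin p) (Fin p) ℝ) := Matrix.linftyOpNormedRing
  letI : NormedAlgebra ℝ (Matrix (Fin p) (Fin p) ℝ) := Matrix.linftyOpNormedAlgebra
  haveI : CompleteSpace (Matrix (Fin p) (Fin p) ℝ) := FiniteDimensional.complete ℝ _
  have h := expSeries_summable' (𝕂 := ℝ) A
  have := (LinearMap.toContinuousLinearMap L).map_tsum h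
  rw [exp_eq_tsum ℝ]
  simpa using this

lemma summable_clm (L : Matrix (Fin p) (Fin p) ℝ →ₗ[ℝ] ℝ) (A : Matrix (Fin p) (Fin p) ℝ) :
    Summable fun n : ℕ => ((n.factorial : ℝ)⁻¹) * L (A ^ n) := by
  letI : SeminormedRing (Matrix (Fin p) (Fin p) ℝ) := Matrix.linftyOpSemiNormedRing
  letI : NormedRing (Matrix (Fin p) (Fin p) ℝ) := Matrix.linftyOpNormedRing
  letI : NormedAlgebra ℝ (Matrix (Fin p) (Fin p) ℝ) := Matrix.linftyOpNormedAlgebra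
  haveI : CompleteSpace (Matrix (Fin p) (Fin p) ℝ) := FiniteDimensional.complete ℝ _
  have h := expSeries_summable' (𝕂 := ℝ) A
  have := h.map (LinearMap.toContinuousLinearMap L : Matrix (Fin p) (Fin p) ℝ →+ ℝ)
    (LinearMap.toContinuousLinearMap L).continuous
  simpa [Function.comp_def] using this

lemma exp_smul_shift (T : Matrix (Fin p) (Fin p) ℝ) (s c : ℝ) :
    exp (s • T) =
      Real.exp (-(s*c)) • exp (s • (T + c • (1 : Matrix (Fin p) (Fin p) ℝ))) := by
  have hsplit : s • T = s • (T + c • (1 : Matrix (Fin p) (Fin p) ℝ)) + (-(s*c)) • 1 := by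
    rw [smul_add, smul_smul, add_assoc, ← add_smul]
    simp
  have hcomm : Commute (s • (T + c • (1 : Matrix (Fin p) (Fin p) ℝ))) ((-(s*c)) • 1) :=
    (Commute.one_right _).smul_right _
  rw [hsplit, Matrix.exp_add_of_commute _ _ hcomm]
  have h1 : exp ((-(s*c)) • (1 : Matrix (Fin p) (Fin p) ℝ)) = Real.exp (-(s*c)) • 1 := by
    have hfun : exp (fun _ : Fin p => -(s*c)) = fun _ : Fin p => Real.exp (-(s*c)) := by
      funext i
      rw [Pi.coe_exp, ← Real.exp_eq_exp_ℝ]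
    rw [Matrix.smul_one_eq_diagonal, Matrix.exp_diagonal, Matrix.smul_one_eq_diagonal, hfun]
  rw [h1, mul_smul_comm, mul_one]

lemma pow_entry_nonneg {M : Matrix (Fin p) (Fin p) ℝ} (h : ∀ i j, 0 ≤ M i j) :
    ∀ n, ∀ i j, 0 ≤ (M ^ n) i j := by
  intro n
  induction n with
  | zero =>
    intro i j
    rw [pow_zero, Matrix.one_apply]
    split <;> norm_num
  | succ n ih =>
    intro i j
    rw [pow_succ, Matrix.mul_apply]
    exact Finset.sum_nonneg fun k _ => mul_nonneg (ih i k) (h k j)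

lemma pow_rowsum_le {M : Matrix (Fin p) (Fin p) ℝ} (h : ∀ i j, 0 ≤ M i j) {r : ℝ}
    (hr : 0 ≤ r) (hrow : ∀ i, ∑ j, M i j ≤ r) :
    ∀ n, ∀ i, ∑ j, (M ^ n) i j ≤ r ^ n := by
  intro n
  induction n with
  | zero => intro i; simp [Matrix.one_apply]
  | succ n ih =>
    intro i
    have : ∑ j, (M ^ (n+1)) i j = ∑ k, M i k * ∑ j, (M ^ n) k j := by
      simp_rw [pow_succ', Matrix.mul_apply, Finset.mul_sum]
      exact Finset.sum_comm
    rw [this, pow_succ']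
    calc ∑ k, M i k * ∑ j, (M ^ n) k j ≤ ∑ k, M i k * r ^ n := by
          refine Finset.sum_le_sum fun k _ => ?_
          exact mul_le_mul_of_nonneg_left (ih k) (h i k)
      _ = (∑ k, M i k) * r ^ n := by rw [Finset.sum_mul]
      _ ≤ r * r ^ n := mul_le_mul_of_nonneg_right (hrow i) (pow_nonneg hr n)


variable (T : Matrix (Fin p) (Fin p) ℝ)

/-- entrywise bound making `T + cBound•1` nonnegative -/
def cBound : ℝ := ∑ i, ∑ j, |T i j|

lemma cBound_nonneg : 0 ≤ cBound T :=
  Finset.sum_nonneg fun _ _ => Finset.sum_nonneg fun _ _ => abs_nonneg _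

lemma abs_le_cBound (i j : Fin p) : |T i j| ≤ cBound T := by
  have h1 : |T i j| ≤ ∑ j', |T i j'| :=
    Finset.single_le_sum (fun k _ => abs_nonneg (T i k)) (Finset.mem_univ j)
  refine h1.trans ?_
  exact Finset.single_le_sum
    (fun k (_ : k ∈ Finset.univ) => Finset.sum_nonneg fun l _ => abs_nonneg (T k l))
    (Finset.mem_univ i)

variable {T}

lemma B_nonneg (hT1 : ∀ i j, i ≠ j → 0 ≤ T i j) (i j : Fin p) :
    0 ≤ (T + cBound T • (1 : Matrix (Fin p) (Fin p) ℝ)) i j := by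
  rcases eq_or_ne i j with rfl | hne
  · have := abs_le_cBound T i i
    simp only [Matrix.add_apply, Matrix.smul_apply, Matrix.one_apply_eq, smul_eq_mul, mul_one]
    have := neg_abs_le (T i i)
    nlinarith [abs_le_cBound T i i]
  · simp only [Matrix.add_apply, Matrix.smul_apply, Matrix.one_apply_ne hne, smul_eq_mul,
      mul_zero, add_zero]
    exact hT1 i j hne

lemma B_rowsum (hT2 : ∀ i, ∑ j, T i j ≤ 0) (i : Fin p) :
    ∑ j, (T + cBound T • (1 : Matrix (Fin p) (Fin p) ℝ)) i j ≤ cBound T := by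
  have : ∑ j, (T + cBound T • (1 : Matrix (Fin p) (Fin p) ℝ)) i j
      = (∑ j, T i j) + cBound T := by
    simp only [Matrix.add_apply, Matrix.smul_apply, smul_eq_mul, Finset.sum_add_distrib]
    congr 1
    rw [Finset.sum_eq_single i]
    · simp
    · intro b _ hb
      rw [Matrix.one_apply_ne (Ne.symm hb), mul_zero]
    · simp
  rw [this]
  linarith [hT2 i]

lemma exp_entry_nonneg (hT1 : ∀ i j, i ≠ j → 0 ≤ T i j) {s : ℝ} (hs : 0 ≤ s) (i j : Fin p) :
    0 ≤ exp (s • T) i j := by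
  rw [exp_smul_shift T s (cBound T)]
  simp only [Matrix.smul_apply, smul_eq_mul]
  refine mul_nonneg (Real.exp_nonneg _) ?_
  have hent : exp (s • (T + cBound T • (1 : Matrix (Fin p) (Fin p) ℝ))) i j
      = vecL i (Pi.single j 1) (exp (s • (T + cBound T • 1))) := by
    simp [vecL, Pi.single_apply, Finset.sum_ite_eq]
  rw [hent, clm_apply_exp]
  refine tsum_nonneg fun n => ?_
  refine mul_nonneg (by positivity) ?_
  have hBn : ∀ i' j', 0 ≤ (s • (T + cBound T • (1 : Matrix (Fin p) (Fin p) ℝ))) i' j' :=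
    fun i' j' => by
      simp only [Matrix.smul_apply, smul_eq_mul]
      exact mul_nonneg hs (B_nonneg hT1 i' j')
  have hpn := pow_entry_nonneg hBn n
  simp only [vecL, LinearMap.coe_mk, AddHom.coe_mk, smul_add]
  have hpn' : ∀ i' j', 0 ≤ ((s • T + s • cBound T • (1 : Matrix (Fin p) (Fin p) ℝ)) ^ n) i' j' := by
    rw [← smul_add]
    exact hpn
  refine Finset.sum_nonneg fun k _ => ?_
  rcases eq_or_ne k j with rfl | hk
  · simpa [Pi.single_apply] using hpn' i k
  · simp [Pi.single_apply, hk]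

lemma exp_rowsum_le_one (hT1 : ∀ i j, i ≠ j → 0 ≤ T i j) (hT2 : ∀ i, ∑ j, T i j ≤ 0)
    {s : ℝ} (hs : 0 ≤ s) (i : Fin p) :
    ∑ j, exp (s • T) i j ≤ 1 := by
  rw [exp_smul_shift T s (cBound T)]
  simp only [Matrix.smul_apply, smul_eq_mul]
  rw [← Finset.mul_sum]
  set B : Matrix (Fin p) (Fin p) ℝ := T + cBound T • 1 with hB
  have hBn : ∀ i' j', 0 ≤ (s • B) i' j' := fun i' j' => by
    simp only [Matrix.smul_apply, smul_eq_mul]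
    exact mul_nonneg hs (B_nonneg hT1 i' j')
  have hBrow : ∀ i', ∑ j, (s • B) i' j ≤ s * cBound T := fun i' => by
    simp only [Matrix.smul_apply, smul_eq_mul, ← Finset.mul_sum]
    exact mul_le_mul_of_nonneg_left (B_rowsum hT2 i') hs
  have hsum : ∑ j, exp (s • B) i j = vecL i 1 (exp (s • B)) := by
    simp [vecL]
  have hkey : ∑ j, exp (s • B) i j ≤ Real.exp (s * cBound T) := by
    rw [hsum, clm_apply_exp]
    have hexp : Real.exp (s * cBound T)
        = ∑' n : ℕ, ((n.factorial : ℝ)⁻¹) * (s * cBound T) ^ n := by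
      rw [Real.exp_eq_exp_ℝ, exp_eq_tsum ℝ]
      simp [smul_eq_mul]
    rw [hexp]
    refine Summable.tsum_le_tsum ?_ (summable_clm _ _) ?_
    · intro n
      refine mul_le_mul_of_nonneg_left ?_ (by positivity)
      have : vecL i 1 ((s • B) ^ n) = ∑ j, ((s • B) ^ n) i j := by simp [vecL]
      rw [this]
      exact pow_rowsum_le hBn (mul_nonneg hs (cBound_nonneg T)) hBrow n i
    · simpa [smul_eq_mul] using expSeries_summable' (𝕂 := ℝ) (s * cBound T)
  calc Real.exp (-(s * cBound T)) * ∑ j, exp (s • B) i j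
      ≤ Real.exp (-(s * cBound T)) * Real.exp (s * cBound T) := by
        refine mul_le_mul_of_nonneg_left hkey (Real.exp_nonneg _)
    _ = 1 := by rw [← Real.exp_add]; simp


/-- row sums of the matrix exponential semigroup -/
def gfun (T : Matrix (Fin p) (Fin p) ℝ) (s : ℝ) (i : Fin p) : ℝ := ∑ j, exp (s • T) i j

lemma exp_smul_add (T : Matrix (Fin p) (Fin p) ℝ) (u v : ℝ) :
    exp ((u + v) • T) = exp (u • T) * exp (v • T) := by
  have hc : Commute (u • T) (v • T) := by
    unfold Commute SemiconjBy
    rw [smul_mul_assoc, mul_smul_comm, smul_mul_assoc, mul_smul_comm, smul_smul, smul_smul,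
      mul_comm u v]
  rw [add_smul]
  exact Matrix.exp_add_of_commute _ _ hc

lemma exp_sum_mul (T : Matrix (Fin p) (Fin p) ℝ) (u v : ℝ) (w : Fin p → ℝ) (i : Fin p) :
    ∑ j, exp ((u + v) • T) i j * w j
      = ∑ k, exp (u • T) i k * (∑ j, exp (v • T) k j * w j) := by
  rw [exp_smul_add]
  simp_rw [Matrix.mul_apply, Finset.sum_mul, Finset.mul_sum, mul_assoc]
  exact Finset.sum_comm

lemma gfun_add (T : Matrix (Fin p) (Fin p) ℝ) (u v : ℝ) (i : Fin p) :
    gfun T (u + v) i = ∑ k, exp (u • T) i k * gfun T v k := by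
  have := exp_sum_mul T u v (fun _ => 1) i
  simpa [gfun] using this

variable {T : Matrix (Fin p) (Fin p) ℝ}

lemma gfun_nonneg (hT1 : ∀ i j, i ≠ j → 0 ≤ T i j) {s : ℝ} (hs : 0 ≤ s) (i : Fin p) :
    0 ≤ gfun T s i :=
  Finset.sum_nonneg fun j _ => exp_entry_nonneg hT1 hs i j

lemma gfun_anti (hT1 : ∀ i j, i ≠ j → 0 ≤ T i j) (hT2 : ∀ i, ∑ j, T i j ≤ 0)
    {u v : ℝ} (hu : 0 ≤ u) (huv : u ≤ v) (i : Fin p) : gfun T v i ≤ gfun T u i := by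
  have hv : v = u + (v - u) := by ring
  rw [hv, gfun_add]
  have hvu : (0:ℝ) ≤ v - u := by linarith
  calc ∑ k, exp (u • T) i k * gfun T (v - u) k
      ≤ ∑ k, exp (u • T) i k * 1 := by
        refine Finset.sum_le_sum fun k _ => ?_
        exact mul_le_mul_of_nonneg_left (exp_rowsum_le_one hT1 hT2 hvu k)
          (exp_entry_nonneg hT1 hu i k)
    _ = gfun T u i := by simp [gfun]

lemma gfun_le_one (hT1 : ∀ i j, i ≠ j → 0 ≤ T i j) (hT2 : ∀ i, ∑ j, T i j ≤ 0)
    {s : ℝ} (hs : 0 ≤ s) (i : Fin p) : gfun T s i ≤ 1 :=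
  exp_rowsum_le_one hT1 hT2 hs i

/-- the pointwise limit of the row sums -/
def wlim (T : Matrix (Fin p) (Fin p) ℝ) (i : Fin p) : ℝ := ⨅ s : ℝ, gfun T (max s 0) i

lemma gfun_tendsto_wlim (hT1 : ∀ i j, i ≠ j → 0 ≤ T i j) (hT2 : ∀ i, ∑ j, T i j ≤ 0)
    (i : Fin p) : Tendsto (fun s : ℝ => gfun T s i) atTop (𝓝 (wlim T i)) := by
  have hanti : Antitone fun s : ℝ => gfun T (max s 0) i := by
    intro s t hst
    exact gfun_anti hT1 hT2 (le_max_right s 0) (max_le_max hst le_rfl) i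
  have hbdd : BddBelow (Set.range fun s : ℝ => gfun T (max s 0) i) := by
    refine ⟨0, ?_⟩
    rintro x ⟨s, rfl⟩
    exact gfun_nonneg hT1 (le_max_right s 0) i
  have h1 : Tendsto (fun s : ℝ => gfun T (max s 0) i) atTop (𝓝 (wlim T i)) :=
    tendsto_atTop_ciInf hanti hbdd
  refine h1.congr' ?_
  filter_upwards [eventually_ge_atTop (0:ℝ)] with s hs
  rw [max_eq_left hs]

lemma wlim_fixed (hT1 : ∀ i j, i ≠ j → 0 ≤ T i j) (hT2 : ∀ i, ∑ j, T i j ≤ 0)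
    {s : ℝ} (hs : 0 ≤ s) (i : Fin p) :
    ∑ k, exp (s • T) i k * wlim T k = wlim T i := by
  have hA : Tendsto (fun v : ℝ => gfun T (s + v) i) atTop (𝓝 (wlim T i)) :=
    (gfun_tendsto_wlim hT1 hT2 i).comp (tendsto_atTop_add_const_left atTop s tendsto_id)
  have hB : Tendsto (fun v : ℝ => ∑ k, exp (s • T) i k * gfun T v k) atTop
      (𝓝 (∑ k, exp (s • T) i k * wlim T k)) := by
    refine tendsto_finset_sum _ fun k _ => ?_
    exact (gfun_tendsto_wlim hT1 hT2 k).const_mul _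
  have heq : (fun v : ℝ => gfun T (s + v) i)
      = fun v : ℝ => ∑ k, exp (s • T) i k * gfun T v k := by
    funext v
    exact gfun_add T s v i
  rw [heq] at hA
  exact tendsto_nhds_unique hB hA

lemma wlim_mulVec_zero (hT1 : ∀ i j, i ≠ j → 0 ≤ T i j) (hT2 : ∀ i, ∑ j, T i j ≤ 0)
    (i : Fin p) : ∑ k, T i k * wlim T k = 0 := by
  letI : SeminormedRing (Matrix (Fin p) (Fin p) ℝ) := Matrix.linftyOpSemiNormedRing
  letI : NormedRing (Matrix (Fin p) (Fin p) ℝ) := Matrix.linftyOpNormedRing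
  letI : NormedAlgebra ℝ (Matrix (Fin p) (Fin p) ℝ) := Matrix.linftyOpNormedAlgebra
  haveI : CompleteSpace (Matrix (Fin p) (Fin p) ℝ) := FiniteDimensional.complete ℝ _
  set L := LinearMap.toContinuousLinearMap (vecL i (wlim T)) with hL
  have hD := hasDerivAt_exp_smul_const' (𝕂 := ℝ) T (1:ℝ)
  have h1 : HasDerivAt (fun u : ℝ => L (exp (u • T))) (L (T * exp ((1:ℝ) • T))) 1 :=
    L.hasFDerivAt.comp_hasDerivAt 1 hD
  have hconst : (fun u : ℝ => L (exp (u • T))) =ᶠ[𝓝 (1:ℝ)] fun _ => wlim T i := by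
    filter_upwards [Ioi_mem_nhds (by norm_num : (0:ℝ) < 1)] with u hu
    have : L (exp (u • T)) = ∑ k, exp (u • T) i k * wlim T k := by
      simp [hL, vecL]
    rw [this, wlim_fixed hT1 hT2 (le_of_lt hu) i]
  have h2 : HasDerivAt (fun u : ℝ => L (exp (u • T))) 0 1 :=
    (hasDerivAt_const (1:ℝ) (wlim T i)).congr_of_eventuallyEq hconst
  have hz : L (T * exp ((1:ℝ) • T)) = 0 := h1.unique h2
  have hexpand : L (T * exp ((1:ℝ) • T)) = ∑ k, T i k * wlim T k := by
    have : L (T * exp ((1:ℝ) • T)) = ∑ j, (T * exp ((1:ℝ) • T)) i j * wlim T j := by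
      simp [hL, vecL]
    rw [this]
    simp_rw [Matrix.mul_apply, Finset.sum_mul, mul_assoc]
    rw [Finset.sum_comm]
    refine Finset.sum_congr rfl fun k _ => ?_
    rw [← Finset.mul_sum, wlim_fixed hT1 hT2 (by norm_num : (0:ℝ) ≤ 1) k]
  rw [← hexpand, hz]

lemma wlim_eq_zero (hT1 : ∀ i j, i ≠ j → 0 ≤ T i j) (hT2 : ∀ i, ∑ j, T i j ≤ 0)
    (heig : ∀ z ∈ spectrum ℂ (T.map (algebraMap ℝ ℂ)), z.re < 0) (i : Fin p) :
    wlim T i = 0 := by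
  by_contra hne
  have hw : wlim T ≠ 0 := fun h => hne (by rw [h]; rfl)
  have hmv : T.mulVec (wlim T) = 0 := by
    funext k
    simpa [Matrix.mulVec, dotProduct] using wlim_mulVec_zero hT1 hT2 k
  have hdet : T.det = 0 := by
    rw [← Matrix.exists_mulVec_eq_zero_iff]
    exact ⟨wlim T, hw, hmv⟩
  have hdetC : (T.map (algebraMap ℝ ℂ)).det = 0 := by
    have h := RingHom.map_det (algebraMap ℝ ℂ) T
    rw [show T.map (algebraMap ℝ ℂ) = (algebraMap ℝ ℂ).mapMatrix T from rfl, ← h, hdet, map_zero]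
  have hnu : ¬ IsUnit (T.map (algebraMap ℝ ℂ)) := by
    rw [Matrix.isUnit_iff_isUnit_det, hdetC]
    exact not_isUnit_zero
  have h0 : (0:ℂ) ∈ spectrum ℂ (T.map (algebraMap ℝ ℂ)) := (spectrum.zero_mem_iff ℂ).2 hnu
  have := heig 0 h0
  simp at this

theorem exp_decay (hT1 : ∀ i j, i ≠ j → 0 ≤ T i j) (hT2 : ∀ i, ∑ j, T i j ≤ 0)
    (heig : ∀ z ∈ spectrum ℂ (T.map (algebraMap ℝ ℂ)), z.re < 0) :
    ∃ lam : ℝ, 0 < lam ∧ ∀ s : ℝ, 0 ≤ s → ∀ i,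
      ∑ j, exp (s • T) i j ≤ 2 * Real.exp (-(lam * s)) := by
  have hhalf : ∃ s₀ : ℝ, 1 ≤ s₀ ∧ ∀ i, gfun T s₀ i ≤ 1/2 := by
    have h1 : ∀ᶠ s : ℝ in atTop, ∀ i, gfun T s i ≤ 1/2 := by
      rw [eventually_all]
      intro i
      have := gfun_tendsto_wlim hT1 hT2 i
      rw [wlim_eq_zero hT1 hT2 heig i] at this
      have := this.eventually_le_const (by norm_num : (0:ℝ) < 1/2)
      exact this
    obtain ⟨s₀, hs₁, hs₂⟩ := (h1.and (eventually_ge_atTop (1:ℝ))).exists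
    exact ⟨s₀, hs₂, hs₁⟩
  obtain ⟨s₀, hs₀1, hs₀⟩ := hhalf
  have hs₀pos : (0:ℝ) < s₀ := lt_of_lt_of_le one_pos hs₀1
  have hiter : ∀ n : ℕ, ∀ i, gfun T (n * s₀) i ≤ (1/2)^n := by
    intro n
    induction n with
    | zero =>
      intro i
      simp only [Nat.cast_zero, zero_mul, pow_zero]
      exact gfun_le_one hT1 hT2 le_rfl i
    | succ n ih =>
      intro i
      have hsplit : ((n+1 : ℕ) : ℝ) * s₀ = (n : ℝ) * s₀ + s₀ := by push_cast; ring
      rw [hsplit, gfun_add]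
      have hns : (0:ℝ) ≤ (n:ℝ) * s₀ := by positivity
      calc ∑ k, exp (((n:ℝ) * s₀) • T) i k * gfun T s₀ k
          ≤ ∑ k, exp (((n:ℝ) * s₀) • T) i k * (1/2) := by
            refine Finset.sum_le_sum fun k _ => ?_
            exact mul_le_mul_of_nonneg_left (hs₀ k) (exp_entry_nonneg hT1 hns i k)
        _ = (1/2) * gfun T ((n:ℝ) * s₀) i := by
            rw [← Finset.sum_mul]; rw [mul_comm]; rfl
        _ ≤ (1/2) * (1/2)^n := by
            refine mul_le_mul_of_nonneg_left (ih i) (by norm_num)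
        _ = (1/2)^(n+1) := by ring
  refine ⟨Real.log 2 / s₀, by positivity, fun s hs i => ?_⟩
  set n : ℕ := ⌊s / s₀⌋₊ with hn
  have hns : (n : ℝ) * s₀ ≤ s := by
    have := Nat.floor_le (by positivity : (0:ℝ) ≤ s / s₀)
    calc (n:ℝ) * s₀ ≤ (s / s₀) * s₀ := by
          exact mul_le_mul_of_nonneg_right this (le_of_lt hs₀pos)
      _ = s := by field_simp
  have h1 : gfun T s i ≤ gfun T ((n:ℝ) * s₀) i :=
    gfun_anti hT1 hT2 (by positivity) hns i
  have h2 : gfun T ((n:ℝ) * s₀) i ≤ (1/2)^n := hiter n i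
  have h3 : ((1:ℝ)/2)^n ≤ 2 * Real.exp (-(Real.log 2 / s₀ * s)) := by
    have hpow : ((1:ℝ)/2)^n = Real.exp (-((n:ℝ) * Real.log 2)) := by
      have : Real.exp (-Real.log 2) = 1/2 := by
        rw [Real.exp_neg, Real.exp_log (by norm_num : (0:ℝ) < 2)]
        norm_num
      rw [← this, ← Real.exp_nat_mul]
      congr 1
      ring
    rw [hpow]
    have hfl : s / s₀ < (n:ℝ) + 1 := Nat.lt_floor_add_one _
    have hlog2 : (0:ℝ) < Real.log 2 := Real.log_pos (by norm_num)
    have hle : -((n:ℝ) * Real.log 2) ≤ Real.log 2 + -(Real.log 2 / s₀ * s) := by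
      have h4 : Real.log 2 / s₀ * s = (s / s₀) * Real.log 2 := by field_simp
      rw [h4]
      nlinarith
    calc Real.exp (-((n:ℝ) * Real.log 2)) ≤ Real.exp (Real.log 2 + -(Real.log 2 / s₀ * s)) :=
          Real.exp_le_exp.2 hle
      _ = 2 * Real.exp (-(Real.log 2 / s₀ * s)) := by
          rw [Real.exp_add, Real.exp_log (by norm_num : (0:ℝ) < 2)]
  calc ∑ j, exp (s • T) i j = gfun T s i := rfl
    _ ≤ (1/2)^n := le_trans h1 h2
    _ ≤ 2 * Real.exp (-(Real.log 2 / s₀ * s)) := h3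

lemma exp_entry_continuous (T : Matrix (Fin p) (Fin p) ℝ) (i j : Fin p) :
    Continuous fun s : ℝ => exp (s • T) i j := by
  letI : SeminormedRing (Matrix (Fin p) (Fin p) ℝ) := Matrix.linftyOpSemiNormedRing
  letI : NormedRing (Matrix (Fin p) (Fin p) ℝ) := Matrix.linftyOpNormedRing
  letI : NormedAlgebra ℝ (Matrix (Fin p) (Fin p) ℝ) := Matrix.linftyOpNormedAlgebra
  haveI : CompleteSpace (Matrix (Fin p) (Fin p) ℝ) := FiniteDimensional.complete ℝ _
  have h1 : Continuous fun s : ℝ => exp (s • T) :=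
    continuous_iff_continuousAt.2 fun s => (hasDerivAt_exp_smul_const' (𝕂 := ℝ) T s).continuousAt
  exact ((continuous_apply j).comp ((continuous_apply i).comp h1))


section PHM
variable {piv : Fin p → ℝ}

lemma phDens_continuous (piv : Fin p → ℝ) (T : Matrix (Fin p) (Fin p) ℝ) :
    Continuous (phDens piv T) := by
  unfold phDens
  refine continuous_finset_sum _ fun i _ => ?_
  refine continuous_finset_sum _ fun j _ => ?_
  exact (continuous_const.mul (exp_entry_continuous T i j)).mul continuous_const

/-- the density of the phase-type law, as an `ℝ≥0∞`-valued function -/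
def phf (piv : Fin p → ℝ) (T : Matrix (Fin p) (Fin p) ℝ) : ℝ → ℝ≥0∞ :=
  fun y => if 0 < y then ENNReal.ofReal (phDens piv T y) else 0

lemma phMeasure_eq (piv : Fin p → ℝ) (T : Matrix (Fin p) (Fin p) ℝ) :
    phMeasure piv T = volume.withDensity (phf piv T) := rfl

lemma phMeasure_Iic (piv : Fin p → ℝ) (T : Matrix (Fin p) (Fin p) ℝ) :
    phMeasure piv T (Set.Iic 0) = 0 := by
  rw [phMeasure_eq, withDensity_apply _ measurableSet_Iic]
  have : ∀ᵐ y ∂(volume : Measure ℝ), y ∈ Set.Iic (0:ℝ) → phf piv T y = 0 := by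
    refine Filter.Eventually.of_forall fun y hy => ?_
    have hyle : ¬ (0 < y) := not_lt.2 (Set.mem_Iic.1 hy)
    simp [phf, hyle]
  rw [setLIntegral_congr_fun_ae measurableSet_Iic this]
  simp

lemma phMeasure_tail {T : Matrix (Fin p) (Fin p) ℝ} (hPH : IsPHRepr piv T) :
    ∃ lam C : ℝ, 0 < lam ∧ 0 < C ∧ ∀ u : ℝ, 0 ≤ u →
      phMeasure piv T (Set.Ioi u) ≤ ENNReal.ofReal (C * Real.exp (-(lam * u))) := by
  obtain ⟨lam, hlam, hdecay⟩ := exp_decay hPH.offdiag_nonneg hPH.rowsum_nonpos hPH.eig_neg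
  set tS : ℝ := ∑ j, (-∑ k, T j k) with htS
  have htv0 : ∀ j : Fin p, 0 ≤ -∑ k, T j k := fun j => by linarith [hPH.rowsum_nonpos j]
  have htS0 : 0 ≤ tS := Finset.sum_nonneg fun j _ => htv0 j
  have htv : ∀ j : Fin p, (-∑ k, T j k) ≤ tS := fun j =>
    Finset.single_le_sum (fun k _ => htv0 k) (Finset.mem_univ j)
  set C₀ : ℝ := 2 * tS + 1 with hC₀
  have hC₀pos : 0 < C₀ := by positivity
  have hdens : ∀ s : ℝ, 0 ≤ s → phDens piv T s ≤ C₀ * Real.exp (-(lam * s)) := by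
    intro s hs
    have hstep : phDens piv T s ≤ ∑ i, piv i * (2 * Real.exp (-(lam * s))) * tS := by
      unfold phDens
      refine Finset.sum_le_sum fun i _ => ?_
      calc ∑ j, piv i * exp (s • T) i j * (-∑ k, T j k)
          ≤ ∑ j, piv i * exp (s • T) i j * tS := by
            refine Finset.sum_le_sum fun j _ => ?_
            exact mul_le_mul_of_nonneg_left (htv j)
              (mul_nonneg (hPH.pi_nonneg i) (exp_entry_nonneg hPH.offdiag_nonneg hs i j))
        _ = piv i * (∑ j, exp (s • T) i j) * tS := by
            rw [← Finset.sum_mul, ← Finset.mul_sum]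
        _ ≤ piv i * (2 * Real.exp (-(lam * s))) * tS := by
            refine mul_le_mul_of_nonneg_right ?_ htS0
            exact mul_le_mul_of_nonneg_left (hdecay s hs i) (hPH.pi_nonneg i)
    calc phDens piv T s ≤ ∑ i, piv i * (2 * Real.exp (-(lam * s))) * tS := hstep
      _ = (∑ i, piv i) * (2 * Real.exp (-(lam * s)) * tS) := by
          rw [Finset.sum_mul]
          exact Finset.sum_congr rfl fun i _ => by ring
      _ = 2 * Real.exp (-(lam * s)) * tS := by rw [hPH.pi_sum_one, one_mul]
      _ ≤ C₀ * Real.exp (-(lam * s)) := by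
          have h := Real.exp_nonneg (-(lam * s))
          nlinarith
  refine ⟨lam, C₀ / lam + 1, hlam, by positivity, fun u hu => ?_⟩
  have hbound : phMeasure piv T (Set.Ioi u)
      ≤ ∫⁻ s in Set.Ioi u, ENNReal.ofReal (C₀ * Real.exp (-(lam * s))) := by
    rw [phMeasure_eq, withDensity_apply _ measurableSet_Ioi]
    refine setLIntegral_mono' measurableSet_Ioi fun s hs => ?_
    have hs0 : 0 < s := lt_of_le_of_lt hu hs
    simp only [phf, if_pos hs0]
    exact ENNReal.ofReal_le_ofReal (hdens s hs0.le)
  have hInt : IntegrableOn (fun s : ℝ => C₀ * Real.exp (-(lam * s))) (Set.Ioi u) := by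
    have := (exp_neg_integrableOn_Ioi u hlam).const_mul C₀
    simpa [neg_mul, IntegrableOn] using this
  have heq : ∫⁻ s in Set.Ioi u, ENNReal.ofReal (C₀ * Real.exp (-(lam * s)))
      = ENNReal.ofReal (∫ s in Set.Ioi u, C₀ * Real.exp (-(lam * s))) := by
    rw [← ofReal_integral_eq_lintegral_ofReal hInt]
    exact Filter.Eventually.of_forall fun s => by positivity
  have hval : ∫ s in Set.Ioi u, Real.exp (-(lam * s)) = Real.exp (-(lam * u)) / lam := by
    have hF : ∀ s ∈ Set.Ioi u, HasDerivAt (fun x : ℝ => -(Real.exp (-(lam * x)) / lam))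
        (Real.exp (-(lam * s))) s := by
      intro s _
      have h1 : HasDerivAt (fun x : ℝ => -(lam * x)) (-lam) s := by
        simpa using ((hasDerivAt_id s).const_mul (-lam))
      have h2 : HasDerivAt (fun x : ℝ => Real.exp (-(lam * x)))
          (Real.exp (-(lam * s)) * (-lam)) s := (Real.hasDerivAt_exp _).comp s h1
      have h3 := (h2.div_const lam).neg
      exact h3.congr_deriv (show -(Real.exp (-(lam * s)) * -lam / lam) = Real.exp (-(lam * s)) by
        rw [mul_neg, neg_div, neg_neg, mul_div_assoc, div_self hlam.ne', mul_one])
    have hcont : ContinuousWithinAt (fun x : ℝ => -(Real.exp (-(lam * x)) / lam))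
        (Set.Ici u) u := by
      apply Continuous.continuousWithinAt
      fun_prop
    have htend : Tendsto (fun x : ℝ => -(Real.exp (-(lam * x)) / lam)) atTop (𝓝 0) := by
      have h1 : Tendsto (fun x : ℝ => -(lam * x)) atTop atBot := by
        refine tendsto_neg_atBot_iff.2 ?_
        exact (tendsto_id.const_mul_atTop hlam)
      have h2 := Real.tendsto_exp_atBot.comp h1
      have h3 := (h2.div_const lam).neg
      simpa using h3
    have hIntExp : IntegrableOn (fun s : ℝ => Real.exp (-(lam * s))) (Set.Ioi u) := by
      simpa [neg_mul] using exp_neg_integrableOn_Ioi u hlam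
    have := integral_Ioi_of_hasDerivAt_of_tendsto hcont hF hIntExp htend
    rw [this]
    ring
  refine hbound.trans ?_
  rw [heq]
  refine ENNReal.ofReal_le_ofReal ?_
  rw [MeasureTheory.integral_const_mul, hval]
  have hE : 0 ≤ Real.exp (-(lam * u)) := Real.exp_nonneg _
  rw [div_eq_mul_inv] at *
  have : C₀ * (Real.exp (-(lam * u)) * lam⁻¹) = (C₀ * lam⁻¹) * Real.exp (-(lam * u)) := by ring
  rw [this]
  have hdiv : C₀ / lam = C₀ * lam⁻¹ := div_eq_mul_inv _ _
  rw [hdiv]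
  nlinarith [hE]
end PHM

section MeasAux

/-- long-tailed distributions have tails heavier than any exponential -/
lemma tail_lb (μ : Measure ℝ) [IsFiniteMeasure μ] (hpos : ∀ x : ℝ, 0 < μ (Set.Ioi x))
    (hlt : Tendsto (fun x => (μ (Set.Ioi (x - 1))).toReal / (μ (Set.Ioi x)).toReal) atTop (𝓝 1))
    {δ : ℝ} (hδ : 0 < δ) :
    ∃ c : ℝ, 0 < c ∧ ∀ u : ℝ, 0 ≤ u → c * Real.exp (-(δ * u)) ≤ (μ (Set.Ioi u)).toReal := by
  set f : ℝ → ℝ := fun u => (μ (Set.Ioi u)).toReal with hf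
  have hfpos : ∀ u, 0 < f u := fun u =>
    ENNReal.toReal_pos (hpos u).ne' (measure_ne_top μ _)
  have hfanti : Antitone f := by
    intro u v huv
    exact ENNReal.toReal_le_toReal (measure_ne_top μ _) (measure_ne_top μ _)
      |>.mpr (measure_mono (Set.Ioi_subset_Ioi huv))
  have hev : ∀ᶠ x in atTop, f (x - 1) / f x < Real.exp δ := by
    refine hlt.eventually_lt_const ?_
    rw [show (1:ℝ) = Real.exp 0 by simp]
    exact Real.exp_lt_exp.2 hδ
  obtain ⟨x₃, hx₃⟩ := hev.exists_forall_of_atTop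
  have hstep : ∀ x : ℝ, x₃ ≤ x → Real.exp (-δ) * f (x - 1) ≤ f x := by
    intro x hx
    have h1 := hx₃ x hx
    have h2 := (div_lt_iff₀ (hfpos x)).1 h1
    have h3 : Real.exp (-δ) * f (x-1) ≤ Real.exp (-δ) * (Real.exp δ * f x) := by
      refine mul_le_mul_of_nonneg_left h2.le (Real.exp_nonneg _)
    calc Real.exp (-δ) * f (x - 1) ≤ Real.exp (-δ) * (Real.exp δ * f x) := h3
      _ = f x := by rw [← mul_assoc, ← Real.exp_add]; simp
  have hiter : ∀ n : ℕ, Real.exp (-(δ * n)) * f x₃ ≤ f (x₃ + n) := by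
    intro n
    induction n with
    | zero => simp
    | succ n ih =>
      have hx : x₃ ≤ x₃ + (n + 1 : ℕ) := by
        push_cast
        linarith [Nat.cast_nonneg (α := ℝ) n]
      have h1 := hstep (x₃ + (n+1 : ℕ)) hx
      have h2 : x₃ + ((n+1 : ℕ) : ℝ) - 1 = x₃ + n := by push_cast; ring
      rw [h2] at h1
      calc Real.exp (-(δ * (n+1 : ℕ))) * f x₃
          = Real.exp (-δ) * (Real.exp (-(δ * n)) * f x₃) := by
            rw [← mul_assoc, ← Real.exp_add]
            congr 2
            push_cast
            ring
        _ ≤ Real.exp (-δ) * f (x₃ + n) :=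
            mul_le_mul_of_nonneg_left ih (Real.exp_nonneg _)
        _ ≤ f (x₃ + (n+1 : ℕ)) := h1
  set c : ℝ := min (f x₃) (f x₃ * Real.exp (δ * (x₃ - 1))) with hc
  have hcpos : 0 < c := lt_min (hfpos x₃) (mul_pos (hfpos x₃) (Real.exp_pos _))
  refine ⟨c, hcpos, fun u hu => ?_⟩
  rcases le_or_gt u x₃ with hux | hux
  · have hexple : Real.exp (-(δ * u)) ≤ 1 := by
      rw [Real.exp_le_one_iff]
      nlinarith
    have h1 : c * Real.exp (-(δ * u)) ≤ c := by nlinarith [Real.exp_nonneg (-(δ * u))]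
    have h2 : c ≤ f x₃ := min_le_left _ _
    exact h1.trans (h2.trans (hfanti hux))
  · set n : ℕ := ⌈u - x₃⌉₊ with hn
    have hn1 : u ≤ x₃ + n := by
      have := Nat.le_ceil (u - x₃)
      linarith
    have hn2 : (n : ℝ) < (u - x₃) + 1 := Nat.ceil_lt_add_one (by linarith)
    have h1 : f (x₃ + n) ≤ f u := hfanti hn1
    have h2 := hiter n
    have h3 : Real.exp (-(δ * (u - x₃ + 1))) ≤ Real.exp (-(δ * n)) := by
      rw [Real.exp_le_exp]
      nlinarith
    have h4 : c * Real.exp (-(δ * u)) ≤ f x₃ * Real.exp (-(δ * (u - x₃ + 1))) := by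
      have hckey : c ≤ f x₃ * Real.exp (δ * (x₃ - 1)) := min_le_right _ _
      have hid : f x₃ * Real.exp (-(δ * (u - x₃ + 1)))
          = (f x₃ * Real.exp (δ * (x₃ - 1))) * Real.exp (-(δ * u)) := by
        rw [mul_assoc, ← Real.exp_add]
        congr 2
        ring
      rw [hid]
      exact mul_le_mul_of_nonneg_right hckey (Real.exp_nonneg _)
    calc c * Real.exp (-(δ * u)) ≤ f x₃ * Real.exp (-(δ * (u - x₃ + 1))) := h4
      _ ≤ f x₃ * Real.exp (-(δ * n)) :=
          mul_le_mul_of_nonneg_left h3 (hfpos x₃).le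
      _ = Real.exp (-(δ * n)) * f x₃ := by ring
      _ ≤ f (x₃ + n) := h2
      _ ≤ f u := h1

/-- computing the measure of a product event by sections over the second coordinate -/
lemma prod_section (μ ν : Measure ℝ) [SFinite μ] [SFinite ν] (a σ R : ℝ) (hσ : 0 < σ) :
    (μ.prod ν) {q : ℝ × ℝ | a < q.1 * q.2 ∧ q.2 ∈ Set.Ioc σ R}
      = ∫⁻ t in Set.Ioc σ R, μ (Set.Ioi (a / t)) ∂ν := by
  have hmS : MeasurableSet {q : ℝ × ℝ | a < q.1 * q.2 ∧ q.2 ∈ Set.Ioc σ R} := by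
    have h1 : MeasurableSet {q : ℝ × ℝ | a < q.1 * q.2} :=
      measurableSet_lt measurable_const (measurable_fst.mul measurable_snd)
    have h2 : MeasurableSet {q : ℝ × ℝ | q.2 ∈ Set.Ioc σ R} :=
      measurable_snd measurableSet_Ioc
    exact h1.inter h2
  rw [Measure.prod_apply_symm hmS]
  have hsec : ∀ t : ℝ, μ ((fun v => (v, t)) ⁻¹' {q : ℝ × ℝ | a < q.1 * q.2 ∧ q.2 ∈ Set.Ioc σ R})
      = (Set.Ioc σ R).indicator (fun t => μ (Set.Ioi (a / t))) t := by
    intro t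
    by_cases ht : t ∈ Set.Ioc σ R
    · rw [Set.indicator_of_mem ht]
      congr 1
      ext v
      have htpos : 0 < t := lt_trans hσ ht.1
      simp only [Set.mem_preimage, Set.mem_setOf_eq, Set.mem_Ioi, ht, and_true]
      exact (div_lt_iff₀ htpos).symm
    · rw [Set.indicator_of_notMem ht]
      have hempty : ((fun v : ℝ => (v, t)) ⁻¹' {q : ℝ × ℝ | a < q.1 * q.2 ∧ q.2 ∈ Set.Ioc σ R})
          = ∅ := by
        ext v
        simp only [Set.mem_preimage, Set.mem_setOf_eq, Set.mem_empty_iff_false, iff_false,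
          not_and]
        intro _ hmem
        exact absurd hmem ht
      rw [hempty, measure_empty]
  rw [lintegral_congr hsec]
  exact lintegral_indicator measurableSet_Ioc _

end MeasAux

end CPHAux



end CPHAuxSection
/-- if `V ≥ 0` has long-tailed law and `Y ~ PH(π,T)` is independent of `V`,
then the law of `VY` is also long-tailed. -/
theorem cph_longTailed
    {Ω : Type*} [MeasureSpace Ω] [IsProbabilityMeasure (ℙ : Measure Ω)]
    {p : ℕ} (piv : Fin p → ℝ) (T : Matrix (Fin p) (Fin p) ℝ) (hPH : IsPHRepr piv T)
    (V Y : Ω → ℝ) (hVm : Measurable V) (hYm : Measurable Y)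
    (hInd : IndepFun V Y ℙ)
    (hVnn : ∀ᵐ ω ∂ℙ, 0 ≤ V ω)
    (hYlaw : Measure.map Y ℙ = phMeasure piv T)
    (hV : LongTailed (Measure.map V ℙ)) :
    LongTailed (Measure.map (fun ω => V ω * Y ω) ℙ) := by
  classical
  set μ : Measure ℝ := Measure.map V ℙ with hμdef
  set ν : Measure ℝ := Measure.map Y ℙ with hνdef
  haveI hμP : IsProbabilityMeasure μ := Measure.isProbabilityMeasure_map hVm.aemeasurable
  haveI hνP : IsProbabilityMeasure ν := Measure.isProbabilityMeasure_map hYm.aemeasurable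
  have hν0 : ν (Set.Iic 0) = 0 := by
    rw [hYlaw]
    exact CPHAux.phMeasure_Iic piv T
  obtain ⟨lam, C, hlam, hC, htail0⟩ := CPHAux.phMeasure_tail hPH
  have htailν : ∀ u : ℝ, 0 ≤ u → ν (Set.Ioi u) ≤ ENNReal.ofReal (C * Real.exp (-(lam * u))) := by
    intro u hu
    rw [hYlaw]
    exact htail0 u hu
  have hρ : Measure.map (fun ω => (V ω, Y ω)) ℙ = μ.prod ν :=
    (ProbabilityTheory.indepFun_iff_map_prod_eq_prod_map_map hVm.aemeasurable
      hYm.aemeasurable).1 hInd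
  set ρ : Measure (ℝ × ℝ) := μ.prod ν with hρdef
  haveI : IsProbabilityMeasure ρ := by infer_instance
  have hSmeas : ∀ z : ℝ, MeasurableSet {q : ℝ × ℝ | z < q.1 * q.2} := fun z =>
    measurableSet_lt measurable_const (measurable_fst.mul measurable_snd)
  have hmul : ∀ z : ℝ, Measure.map (fun ω => V ω * Y ω) ℙ (Set.Ioi z)
      = ρ {q : ℝ × ℝ | z < q.1 * q.2} := by
    intro z
    rw [Measure.map_apply (f := fun ω => V ω * Y ω) (hVm.mul hYm) measurableSet_Ioi, ← hρ,
      Measure.map_apply (hVm.prodMk hYm) (hSmeas z)]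
    rfl
  -- a positive-mass point for ν away from zero
  obtain ⟨m, hm, hQ⟩ : ∃ m : ℝ, 0 < m ∧ 0 < ν (Set.Ioi m) := by
    by_contra hcon
    push_neg at hcon
    have hz : ∀ n : ℕ, ν (Set.Ioi (1 / ((n : ℝ) + 1))) = 0 := fun n =>
      le_antisymm (hcon _ (by positivity)) zero_le
    have hcup : Set.Ioi (0 : ℝ) = ⋃ n : ℕ, Set.Ioi (1 / ((n : ℝ) + 1)) := by
      ext x
      simp only [Set.mem_Ioi, Set.mem_iUnion]
      constructor
      · intro hx
        obtain ⟨n, hn⟩ := exists_nat_one_div_lt hx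
        exact ⟨n, hn⟩
      · rintro ⟨n, hn⟩
        exact lt_trans (by positivity) hn
    have hzero : ν (Set.Ioi (0:ℝ)) = 0 := by
      rw [hcup]
      exact measure_iUnion_null hz
    have hone : ν (Set.Ioi (0:ℝ)) = 1 := by
      have hcompl := measure_add_measure_compl (μ := ν) (measurableSet_Iic (a := (0:ℝ)))
      rw [hν0, zero_add, Set.compl_Iic] at hcompl
      simpa using hcompl
    rw [hzero] at hone
    exact zero_ne_one hone
  set Q : ℝ≥0∞ := ν (Set.Ioi m) with hQdef
  have hQne : Q ≠ 0 := hQ.ne'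
  have hQnetop : Q ≠ ⊤ := measure_ne_top _ _
  -- lower bound for the product tail
  have hDlb : ∀ x : ℝ, 0 ≤ x → μ (Set.Ioi (x / m)) * Q ≤ ρ {q : ℝ × ℝ | x < q.1 * q.2} := by
    intro x hx
    have hrect : Set.Ioi (x / m) ×ˢ Set.Ioi m ⊆ {q : ℝ × ℝ | x < q.1 * q.2} := by
      rintro ⟨v, t⟩ ⟨hv, ht⟩
      simp only [Set.mem_Ioi] at hv ht
      simp only [Set.mem_setOf_eq]
      have htpos : (0:ℝ) < t := lt_trans hm ht
      have hvpos : 0 ≤ x / m := div_nonneg hx hm.le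
      nlinarith [mul_pos (sub_pos.2 hv) htpos, mul_nonneg hvpos (sub_pos.2 ht).le,
        div_mul_cancel₀ x hm.ne']
    calc μ (Set.Ioi (x / m)) * Q = ρ (Set.Ioi (x / m) ×ˢ Set.Ioi m) :=
          (Measure.prod_prod _ _).symm
      _ ≤ ρ {q : ℝ × ℝ | x < q.1 * q.2} := measure_mono hrect
  have hDpos : ∀ x : ℝ, 0 < ρ {q : ℝ × ℝ | x < q.1 * q.2} := by
    intro x
    have h0 : 0 < μ (Set.Ioi (max x 0 / m)) * Q :=
      ENNReal.mul_pos (hV.1 _).ne' hQne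
    have h1 := hDlb (max x 0) (le_max_right _ _)
    have h2 : {q : ℝ × ℝ | max x 0 < q.1 * q.2} ⊆ {q : ℝ × ℝ | x < q.1 * q.2} := by
      intro q hq
      exact lt_of_le_of_lt (le_max_left x 0) hq
    exact lt_of_lt_of_le (lt_of_lt_of_le h0 h1) (measure_mono h2)
  have hDfin : ∀ x : ℝ, ρ {q : ℝ × ℝ | x < q.1 * q.2} ≠ ⊤ := fun x => measure_ne_top _ _
  have hDtpos : ∀ x : ℝ, 0 < (ρ {q : ℝ × ℝ | x < q.1 * q.2}).toReal := fun x =>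
    ENNReal.toReal_pos (hDpos x).ne' (hDfin x)
  -- the main estimate, for nonnegative shifts
  have hmain : ∀ y : ℝ, 0 ≤ y →
      Tendsto (fun x => ((Measure.map (fun ω => V ω * Y ω) ℙ) (Set.Ioi (x - y))).toReal /
        ((Measure.map (fun ω => V ω * Y ω) ℙ) (Set.Ioi x)).toReal) atTop (𝓝 1) := by
    intro y hy
    have hfunrw : (fun x => ((Measure.map (fun ω => V ω * Y ω) ℙ) (Set.Ioi (x - y))).toReal /
        ((Measure.map (fun ω => V ω * Y ω) ℙ) (Set.Ioi x)).toReal)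
        = fun x => (ρ {q : ℝ × ℝ | x - y < q.1 * q.2}).toReal /
          (ρ {q : ℝ × ℝ | x < q.1 * q.2}).toReal := by
      funext x
      rw [hmul, hmul]
    rw [hfunrw]
    have hge1 : ∀ x : ℝ, 1 ≤ (ρ {q : ℝ × ℝ | x - y < q.1 * q.2}).toReal /
        (ρ {q : ℝ × ℝ | x < q.1 * q.2}).toReal := by
      intro x
      rw [le_div_iff₀ (hDtpos x), one_mul]
      refine ENNReal.toReal_mono (hDfin _) (measure_mono ?_)
      intro q hq
      exact lt_of_le_of_lt (by linarith : x - y ≤ x) hq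
    have hclaim : ∀ ε₁ : ℝ, 0 < ε₁ →
        ∀ᶠ x in atTop, (ρ {q : ℝ × ℝ | x - y < q.1 * q.2}).toReal /
          (ρ {q : ℝ × ℝ | x < q.1 * q.2}).toReal ≤ 1 + 3 * ε₁ := by
      intro ε₁ hε₁
      -- choose σ
      obtain ⟨σ, hσpos, hσm, hσsmall⟩ : ∃ σ : ℝ, 0 < σ ∧ 2*σ ≤ m ∧
          ν (Set.Ioc 0 σ) ≤ ENNReal.ofReal ε₁ * Q := by
        have hK : (0:ℝ≥0∞) < ENNReal.ofReal ε₁ * Q :=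
          ENNReal.mul_pos (ENNReal.ofReal_pos.2 hε₁).ne' hQne
        have hanti : Antitone fun n : ℕ => Set.Ioc (0:ℝ) (1/((n:ℝ)+1)) := by
          intro n n' hnn'
          refine Set.Ioc_subset_Ioc_right ?_
          have h1 : ((n:ℝ)+1) ≤ ((n':ℝ)+1) := by exact_mod_cast by omega
          exact one_div_le_one_div_of_le (by positivity) h1
        have hseq := tendsto_measure_iInter_atTop (μ := ν)
          (fun n => (measurableSet_Ioc).nullMeasurableSet) hanti ⟨0, measure_ne_top _ _⟩
        have hint : (⋂ n : ℕ, Set.Ioc (0:ℝ) (1/((n:ℝ)+1))) = ∅ := by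
          ext x
          simp only [Set.mem_iInter, Set.mem_Ioc, Set.mem_empty_iff_false, iff_false, not_forall]
          by_cases hx : 0 < x
          · obtain ⟨n, hn⟩ := exists_nat_one_div_lt hx
            exact ⟨n, fun hc => absurd hc.2 (not_le.2 hn)⟩
          · exact ⟨0, fun hc => hx hc.1⟩
        rw [hint, measure_empty] at hseq
        obtain ⟨n, hn⟩ := (hseq.eventually_lt_const hK).exists
        refine ⟨min (m/2) (1/((n:ℝ)+1)), by positivity, ?_, ?_⟩
        · have := min_le_left (m/2) (1/((n:ℝ)+1))
          linarith
        · refine le_trans (measure_mono (Set.Ioc_subset_Ioc_right (min_le_right _ _))) hn.le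
      -- choose x₀
      have hx₀ex : ∃ x₀ : ℝ, 1 ≤ x₀ ∧ ∀ u : ℝ, x₀ ≤ u →
          μ (Set.Ioi (u - y/σ)) ≤ ENNReal.ofReal (1+ε₁) * μ (Set.Ioi u) := by
        have h2 : ∀ᶠ u in atTop,
            (μ (Set.Ioi (u - y/σ))).toReal / (μ (Set.Ioi u)).toReal < 1 + ε₁ :=
          (hV.2 (y/σ)).eventually_lt_const (by linarith)
        obtain ⟨x₀', hx₀'⟩ := h2.exists_forall_of_atTop
        refine ⟨max x₀' 1, le_max_right _ _, fun u hu => ?_⟩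
        have h3 := hx₀' u (le_trans (le_max_left _ _) hu)
        have hpos : 0 < (μ (Set.Ioi u)).toReal :=
          ENNReal.toReal_pos (hV.1 u).ne' (measure_ne_top μ _)
        have h4 : (μ (Set.Ioi (u - y/σ))).toReal ≤ (1+ε₁) * (μ (Set.Ioi u)).toReal :=
          ((div_lt_iff₀ hpos).1 h3).le
        calc μ (Set.Ioi (u - y/σ))
            = ENNReal.ofReal ((μ (Set.Ioi (u - y/σ))).toReal) :=
              (ENNReal.ofReal_toReal (measure_ne_top _ _)).symm
          _ ≤ ENNReal.ofReal ((1+ε₁) * (μ (Set.Ioi u)).toReal) := ENNReal.ofReal_le_ofReal h4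
          _ = ENNReal.ofReal (1+ε₁) * ENNReal.ofReal ((μ (Set.Ioi u)).toReal) :=
              ENNReal.ofReal_mul (by linarith)
          _ = ENNReal.ofReal (1+ε₁) * μ (Set.Ioi u) := by
              rw [ENNReal.ofReal_toReal (measure_ne_top _ _)]
      obtain ⟨x₀, hx₀1, hx₀⟩ := hx₀ex
      have hx₀pos : 0 < x₀ := lt_of_lt_of_le one_pos hx₀1
      set δ : ℝ := lam * m / (2 * x₀) with hδdef
      have hδpos : 0 < δ := by positivity
      obtain ⟨c, hcpos, hLB⟩ := CPHAux.tail_lb μ hV.1 (hV.2 1) hδpos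
      have hQt : 0 < Q.toReal := ENNReal.toReal_pos hQne hQnetop
      -- eventual comparability of exponential scales
      have hP3 : ∀ᶠ x in atTop, C * Real.exp (-(lam * (x/x₀)))
          ≤ ε₁ * Q.toReal * (c * Real.exp (-(δ * (x/m)))) := by
        have hgr : Tendsto (fun x : ℝ => Real.exp (lam/(2*x₀) * x)) atTop atTop :=
          Real.tendsto_exp_atTop.comp (tendsto_id.const_mul_atTop (by positivity))
        filter_upwards [hgr.eventually_ge_atTop (C / (ε₁ * Q.toReal * c))] with x hx
        have hKpos : 0 < ε₁ * Q.toReal * c := by positivity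
        set a : ℝ := lam/(2*x₀) * x with hadef
        have hid1 : δ * (x/m) = a := by
          rw [hδdef, hadef]
          field_simp
        have hid2 : lam * (x/x₀) = 2 * a := by
          rw [hadef]
          field_simp
        have hx' : C ≤ (ε₁ * Q.toReal * c) * Real.exp a := by
          have := (div_le_iff₀ hKpos).1 hx
          linarith [this]
        have h5 : C * Real.exp (-(2*a))
            ≤ ((ε₁ * Q.toReal * c) * Real.exp a) * Real.exp (-(2*a)) :=
          mul_le_mul_of_nonneg_right hx' (Real.exp_nonneg _)
        have h6 : ((ε₁ * Q.toReal * c) * Real.exp a) * Real.exp (-(2*a))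
            = (ε₁ * Q.toReal) * (c * Real.exp (-a)) := by
          rw [mul_assoc, mul_assoc, ← Real.exp_add]
          ring_nf
        rw [hid1, hid2]
        calc C * Real.exp (-(2*a)) ≤ _ := h5
          _ = ε₁ * Q.toReal * (c * Real.exp (-a)) := h6
      -- the eventual bound
      filter_upwards [eventually_ge_atTop (2*y + 1), hP3] with x hx1 hx3
      have hx0 : 0 < x := by nlinarith
      have hapos : 0 < x - y := by nlinarith
      set R : ℝ := x / x₀ with hRdef
      have hR0 : 0 ≤ R := by positivity
      -- cover the large-product event
      have hcover : {q : ℝ × ℝ | x - y < q.1 * q.2} ⊆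
          ({q : ℝ × ℝ | q.2 ≤ 0} ∪ {q : ℝ × ℝ | x - y < q.1 * q.2 ∧ q.2 ∈ Set.Ioc 0 σ}) ∪
          ({q : ℝ × ℝ | x - y < q.1 * q.2 ∧ q.2 ∈ Set.Ioc σ R} ∪ {q : ℝ × ℝ | R < q.2}) := by
        intro q hq
        rcases le_or_gt q.2 0 with h|h
        · exact Or.inl (Or.inl h)
        rcases le_or_gt q.2 σ with h2|h2
        · exact Or.inl (Or.inr ⟨hq, h, h2⟩)
        rcases le_or_gt q.2 R with h3|h3
        · exact Or.inr (Or.inl ⟨hq, h2, h3⟩)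
        · exact Or.inr (Or.inr h3)
      have hN : ρ {q : ℝ × ℝ | x - y < q.1 * q.2} ≤
          (ρ {q : ℝ × ℝ | q.2 ≤ 0} + ρ {q : ℝ × ℝ | x - y < q.1 * q.2 ∧ q.2 ∈ Set.Ioc 0 σ})
          + (ρ {q : ℝ × ℝ | x - y < q.1 * q.2 ∧ q.2 ∈ Set.Ioc σ R}
            + ρ {q : ℝ × ℝ | R < q.2}) :=
        le_trans (measure_mono hcover) (le_trans (measure_union_le _ _)
          (add_le_add (measure_union_le _ _) (measure_union_le _ _)))
      -- zone A
      have hA : ρ {q : ℝ × ℝ | q.2 ≤ 0} = 0 := by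
        have hset : {q : ℝ × ℝ | q.2 ≤ 0} = (Set.univ : Set ℝ) ×ˢ Set.Iic 0 := by
          ext q
          simp [Set.mem_prod]
        rw [hset, Measure.prod_prod, hν0, mul_zero]
      -- zone B
      have hB : ρ {q : ℝ × ℝ | x - y < q.1 * q.2 ∧ q.2 ∈ Set.Ioc 0 σ}
          ≤ ENNReal.ofReal ε₁ * ρ {q : ℝ × ℝ | x < q.1 * q.2} := by
        have hsub : {q : ℝ × ℝ | x - y < q.1 * q.2 ∧ q.2 ∈ Set.Ioc 0 σ}
            ⊆ Set.Ioi ((x-y)/σ) ×ˢ Set.Ioc 0 σ := by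
          rintro ⟨v, t⟩ ⟨hq, ht0, htσ⟩
          refine ⟨?_, ht0, htσ⟩
          simp only [Set.mem_Ioi]
          have h1 : (x - y)/t < v := (div_lt_iff₀ ht0).2 hq
          have h2 : (x - y)/σ ≤ (x - y)/t := div_le_div_of_nonneg_left hapos.le ht0 htσ
          linarith
        have hge : x/m ≤ (x-y)/σ := by
          have h2 : x / m ≤ x / (2*σ) :=
            div_le_div_of_nonneg_left hx0.le (by positivity) hσm
          have h3 : x / (2*σ) ≤ (x - y)/σ := by
            rw [div_le_div_iff₀ (by positivity) hσpos]
            nlinarith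
          linarith
        calc ρ {q : ℝ × ℝ | x - y < q.1 * q.2 ∧ q.2 ∈ Set.Ioc 0 σ}
            ≤ ρ (Set.Ioi ((x-y)/σ) ×ˢ Set.Ioc 0 σ) := measure_mono hsub
          _ = μ (Set.Ioi ((x-y)/σ)) * ν (Set.Ioc 0 σ) := Measure.prod_prod _ _
          _ ≤ μ (Set.Ioi (x/m)) * (ENNReal.ofReal ε₁ * Q) :=
              mul_le_mul' (measure_mono (Set.Ioi_subset_Ioi hge)) hσsmall
          _ = ENNReal.ofReal ε₁ * (μ (Set.Ioi (x/m)) * Q) := by ring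
          _ ≤ ENNReal.ofReal ε₁ * ρ {q : ℝ × ℝ | x < q.1 * q.2} :=
              mul_le_mul_right (hDlb x hx0.le) _
      -- zone C
      have hCz : ρ {q : ℝ × ℝ | x - y < q.1 * q.2 ∧ q.2 ∈ Set.Ioc σ R}
          ≤ ENNReal.ofReal (1+ε₁) * ρ {q : ℝ × ℝ | x < q.1 * q.2} := by
        rw [CPHAux.prod_section μ ν (x - y) σ R hσpos]
        have hpt : ∀ t ∈ Set.Ioc σ R,
            μ (Set.Ioi ((x-y)/t)) ≤ ENNReal.ofReal (1+ε₁) * μ (Set.Ioi (x/t)) := by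
          intro t ht
          have htpos : 0 < t := lt_trans hσpos ht.1
          have hx₀t : x₀ ≤ x / t := by
            rw [le_div_iff₀ htpos]
            have h7 : t * x₀ ≤ x := (le_div_iff₀ hx₀pos).1 ht.2
            linarith
          have hshift : x/t - y/σ ≤ (x - y)/t := by
            have h5 : y/t ≤ y/σ := div_le_div_of_nonneg_left hy hσpos ht.1.le
            have h6 : (x - y)/t = x/t - y/t := by ring
            linarith
          calc μ (Set.Ioi ((x-y)/t)) ≤ μ (Set.Ioi (x/t - y/σ)) :=
                measure_mono (Set.Ioi_subset_Ioi hshift)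
            _ ≤ ENNReal.ofReal (1+ε₁) * μ (Set.Ioi (x/t)) := hx₀ (x/t) hx₀t
        calc (∫⁻ t in Set.Ioc σ R, μ (Set.Ioi ((x-y)/t)) ∂ν)
            ≤ ∫⁻ t in Set.Ioc σ R, ENNReal.ofReal (1+ε₁) * μ (Set.Ioi (x/t)) ∂ν :=
              setLIntegral_mono' measurableSet_Ioc hpt
          _ = ENNReal.ofReal (1+ε₁) * ∫⁻ t in Set.Ioc σ R, μ (Set.Ioi (x/t)) ∂ν :=
              lintegral_const_mul' _ _ ENNReal.ofReal_ne_top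
          _ = ENNReal.ofReal (1+ε₁) * ρ {q : ℝ × ℝ | x < q.1 * q.2 ∧ q.2 ∈ Set.Ioc σ R} := by
              rw [CPHAux.prod_section μ ν x σ R hσpos]
          _ ≤ ENNReal.ofReal (1+ε₁) * ρ {q : ℝ × ℝ | x < q.1 * q.2} :=
              mul_le_mul_right (measure_mono fun q hq => hq.1) _
      -- zone D
      have hD3 : ρ {q : ℝ × ℝ | R < q.2} ≤ ENNReal.ofReal ε₁ * ρ {q : ℝ × ℝ | x < q.1 * q.2} := by
        have hset : {q : ℝ × ℝ | R < q.2} = (Set.univ : Set ℝ) ×ˢ Set.Ioi R := by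
          ext q
          simp [Set.mem_prod]
        have h1 : ρ {q : ℝ × ℝ | R < q.2} = ν (Set.Ioi R) := by
          rw [hset, Measure.prod_prod]
          simp
        have h2 : ν (Set.Ioi R) ≤ ENNReal.ofReal (C * Real.exp (-(lam * R))) := htailν R hR0
        have h3 : ENNReal.ofReal (C * Real.exp (-(lam * R)))
            ≤ ENNReal.ofReal (ε₁ * Q.toReal * (c * Real.exp (-(δ * (x/m))))) := by
          refine ENNReal.ofReal_le_ofReal ?_
          rw [hRdef]
          exact hx3
        have h5 : ENNReal.ofReal (c * Real.exp (-(δ * (x/m)))) ≤ μ (Set.Ioi (x/m)) := by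
          have h7 := hLB (x/m) (by positivity)
          calc ENNReal.ofReal (c * Real.exp (-(δ * (x/m))))
              ≤ ENNReal.ofReal ((μ (Set.Ioi (x/m))).toReal) := ENNReal.ofReal_le_ofReal h7
            _ = μ (Set.Ioi (x/m)) := ENNReal.ofReal_toReal (measure_ne_top _ _)
        have h4 : ENNReal.ofReal (ε₁ * Q.toReal * (c * Real.exp (-(δ * (x/m)))))
            = ENNReal.ofReal ε₁ * ENNReal.ofReal Q.toReal
              * ENNReal.ofReal (c * Real.exp (-(δ * (x/m)))) := by
          rw [ENNReal.ofReal_mul (by positivity), ENNReal.ofReal_mul hε₁.le]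
        have h6 : ENNReal.ofReal Q.toReal = Q := ENNReal.ofReal_toReal hQnetop
        calc ρ {q : ℝ × ℝ | R < q.2} = ν (Set.Ioi R) := h1
          _ ≤ ENNReal.ofReal (C * Real.exp (-(lam * R))) := h2
          _ ≤ ENNReal.ofReal (ε₁ * Q.toReal * (c * Real.exp (-(δ * (x/m))))) := h3
          _ = ENNReal.ofReal ε₁ * ENNReal.ofReal Q.toReal
              * ENNReal.ofReal (c * Real.exp (-(δ * (x/m)))) := h4
          _ ≤ ENNReal.ofReal ε₁ * Q * μ (Set.Ioi (x/m)) := by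
              rw [h6]
              exact mul_le_mul_right h5 _
          _ = ENNReal.ofReal ε₁ * (μ (Set.Ioi (x/m)) * Q) := by ring
          _ ≤ ENNReal.ofReal ε₁ * ρ {q : ℝ × ℝ | x < q.1 * q.2} :=
              mul_le_mul_right (hDlb x hx0.le) _
      -- combine
      have hfinal : ρ {q : ℝ × ℝ | x - y < q.1 * q.2}
          ≤ ENNReal.ofReal (1 + 3*ε₁) * ρ {q : ℝ × ℝ | x < q.1 * q.2} := by
        have hsum := le_trans hN (add_le_add (add_le_add hA.le hB) (add_le_add hCz hD3))
        have hcollect : (0 + ENNReal.ofReal ε₁ * ρ {q : ℝ × ℝ | x < q.1 * q.2})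
            + (ENNReal.ofReal (1+ε₁) * ρ {q : ℝ × ℝ | x < q.1 * q.2}
              + ENNReal.ofReal ε₁ * ρ {q : ℝ × ℝ | x < q.1 * q.2})
            = (ENNReal.ofReal ε₁ + ENNReal.ofReal (1+ε₁) + ENNReal.ofReal ε₁)
              * ρ {q : ℝ × ℝ | x < q.1 * q.2} := by ring
        have hofr : ENNReal.ofReal ε₁ + ENNReal.ofReal (1+ε₁) + ENNReal.ofReal ε₁
            = ENNReal.ofReal (1 + 3*ε₁) := by
          rw [← ENNReal.ofReal_add hε₁.le (by linarith), ← ENNReal.ofReal_add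
            (by linarith) hε₁.le]
          congr 1
          ring
        rw [hcollect, hofr] at hsum
        exact hsum
      have hfin2 : (ρ {q : ℝ × ℝ | x - y < q.1 * q.2}).toReal
          ≤ (1 + 3*ε₁) * (ρ {q : ℝ × ℝ | x < q.1 * q.2}).toReal := by
        have h8 := ENNReal.toReal_mono
          (ENNReal.mul_ne_top ENNReal.ofReal_ne_top (hDfin x)) hfinal
        rw [ENNReal.toReal_mul, ENNReal.toReal_ofReal (by positivity)] at h8
        exact h8
      rw [div_le_iff₀ (hDtpos x)]
      exact hfin2
    rw [Metric.tendsto_atTop]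
    intro ε hε
    obtain ⟨N, hN⟩ := (hclaim (ε/4) (by positivity)).exists_forall_of_atTop
    refine ⟨N, fun x hx => ?_⟩
    have h1 := hge1 x
    have h2 := hN x hx
    rw [Real.dist_eq, abs_sub_lt_iff]
    constructor <;> nlinarith
  constructor
  · intro x
    rw [hmul x]
    exact hDpos x
  · intro y
    rcases le_or_gt 0 y with hy | hy
    · exact hmain y hy
    · set c : ℝ := -y with hcdef
      have hc : 0 < c := by simpa [hcdef] using hy
      have h1 := hmain c hc.le
      have h2 : Tendsto (fun x : ℝ => x + c) atTop atTop :=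
        tendsto_atTop_add_const_right _ _ tendsto_id
      have h3 := (h1.comp h2).inv₀ one_ne_zero
      rw [inv_one] at h3
      refine h3.congr fun x => ?_
      simp only [Function.comp_apply]
      rw [show x + c - c = x by ring, show x - y = x + c by rw [hcdef]; ring, inv_div]
end
end
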